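/- arXiv:0811.1169 — 7 statements merged into one kernel-verified Lean document; each statement's English description precedes it below -/
import Mathlib

section
/- Let μ ≥ 0, n ≥ 0 an integer, and let h : (0,∞) → ℝ be measurable with ∫₀^∞ h(y)² y^{2n+2} e^{μy} dy < ∞. Define H(y) = ∫_y^∞ h(x) dx. Then ∫₀^∞ H(y)² y^{2n} e^{μy} dy ≤ 4 ∫₀^∞ h(y)² y^{2n+2} e^{μy} dy. -/
open MeasureTheory Real Set
open scoped ENNReal

-- Tonelli swap over the region 0 < y < x
lemma hardy_swap (F g : ℝ → ℝ≥0∞) (hF : Measurable F) (hg : Measurable g) :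
    ∫⁻ y in Ioi (0:ℝ), g y * ∫⁻ x in Ioi y, F x
      = ∫⁻ x in Ioi (0:ℝ), F x * ∫⁻ y in Ioo 0 x, g y := by
  set k : ℝ × ℝ → ℝ≥0∞ := fun p =>
    Set.indicator {p : ℝ × ℝ | 0 < p.1 ∧ p.1 < p.2} (fun p => g p.1 * F p.2) p with hk
  have hset : MeasurableSet {p : ℝ × ℝ | 0 < p.1 ∧ p.1 < p.2} :=
    (measurableSet_lt measurable_const measurable_fst).inter
      (measurableSet_lt measurable_fst measurable_snd)
  have hkm : Measurable k :=
    ((hg.comp measurable_fst).mul (hF.comp measurable_snd)).indicator hset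
  have L : ∫⁻ y in Ioi (0:ℝ), g y * ∫⁻ x in Ioi y, F x = ∫⁻ y, ∫⁻ x, k (y, x) := by
    rw [← lintegral_indicator measurableSet_Ioi]
    congr 1
    ext y
    by_cases hy : 0 < y
    · rw [Set.indicator_of_mem (mem_Ioi.mpr hy), ← lintegral_const_mul _ hF,
        ← lintegral_indicator measurableSet_Ioi]
      congr 1
      ext x
      by_cases hx : y < x
      · simp [hk, Set.indicator_apply, hy, hx]
      · simp [hk, Set.indicator_apply, hy, hx]
    · rw [Set.indicator_of_notMem (by simpa using hy)]
      refine ((lintegral_eq_zero_iff (hkm.comp (measurable_prodMk_left))).mpr ?_).symm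
      filter_upwards with x
      simp [hk, Set.indicator_apply, hy]
  have R : ∫⁻ x in Ioi (0:ℝ), F x * ∫⁻ y in Ioo 0 x, g y = ∫⁻ x, ∫⁻ y, k (y, x) := by
    rw [← lintegral_indicator measurableSet_Ioi]
    congr 1
    ext x
    by_cases hx : 0 < x
    · rw [Set.indicator_of_mem (mem_Ioi.mpr hx), mul_comm, ← lintegral_mul_const _ hg,
        ← lintegral_indicator measurableSet_Ioo]
      congr 1
    · rw [Set.indicator_of_notMem (by simpa using hx)]
      refine ((lintegral_eq_zero_iff (hkm.comp (measurable_prodMk_right))).mpr ?_).symm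
      filter_upwards with y
      simp only [Pi.zero_apply, hk, Function.comp_apply, Set.indicator_apply_eq_zero,
        Set.mem_setOf_eq]
      intro hc
      exact absurd (hc.1.trans hc.2) hx
  rw [L, R, lintegral_lintegral_swap (by exact hkm.aemeasurable)]

-- ∫⁻ over Ioi y of x^(-c) = y^(1-c)/(c-1) for c > 1, y > 0
lemma hardy_tail_rpow {c y : ℝ} (hc : 1 < c) (hy : 0 < y) :
    ∫⁻ x in Ioi y, ENNReal.ofReal (x ^ (-c)) = ENNReal.ofReal (y ^ (1 - c) / (c - 1)) := by
  have hint : IntegrableOn (fun x : ℝ => x ^ (-c)) (Ioi y) :=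
    integrableOn_Ioi_rpow_of_lt (by linarith) hy
  rw [← ofReal_integral_eq_lintegral_ofReal hint ?_]
  · rw [integral_Ioi_rpow_of_lt (by linarith) hy]
    congr 1
    rw [show -c + 1 = 1 - c by ring]
    have h1 : (1:ℝ) - c ≠ 0 := by linarith
    have h2 : c - 1 ≠ 0 := by linarith
    field_simp
    ring
  · filter_upwards [ae_restrict_mem measurableSet_Ioi] with x hx
    exact Real.rpow_nonneg (le_of_lt (hy.trans hx)) _

-- ∫⁻ over Ioo 0 x of y^(b-1) = x^b/b for b > 0, x > 0
lemma hardy_head_rpow {b x : ℝ} (hb : 0 < b) (hx : 0 < x) :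
    ∫⁻ y in Ioo (0:ℝ) x, ENNReal.ofReal (y ^ (b - 1)) = ENNReal.ofReal (x ^ b / b) := by
  have hii : IntervalIntegrable (fun y : ℝ => y ^ (b - 1)) volume 0 x :=
    intervalIntegral.intervalIntegrable_rpow' (by linarith)
  have hint : IntegrableOn (fun y : ℝ => y ^ (b - 1)) (Ioo 0 x) :=
    ((intervalIntegrable_iff_integrableOn_Ioc_of_le hx.le).mp hii).mono_set Ioo_subset_Ioc_self
  rw [← ofReal_integral_eq_lintegral_ofReal hint ?_]
  · congr 1
    rw [← integral_Ioc_eq_integral_Ioo, ← intervalIntegral.integral_of_le hx.le,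
      integral_rpow (Or.inl (by linarith))]
    rw [sub_add_cancel, Real.zero_rpow hb.ne']
    ring
  · filter_upwards [ae_restrict_mem measurableSet_Ioo] with y hy
    exact Real.rpow_nonneg hy.1.le _

lemma hardy_measurable_rpow_const (p : ℝ) : Measurable fun x : ℝ => x ^ p := by
  have hfe : (fun x : ℝ => x ^ p) = fun x =>
      if 0 < x then Real.exp (Real.log x * p)
      else if x = 0 then (if p = 0 then 1 else 0)
      else Real.exp (Real.log x * p) * Real.cos (p * π) := by
    ext x
    rcases lt_trichotomy x 0 with hx|hx|hx
    · rw [if_neg (not_lt.mpr hx.le), if_neg hx.ne, Real.rpow_def_of_neg hx]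
    · subst hx
      by_cases hp : p = 0
      · simp [hp]
      · simp [hp, Real.zero_rpow hp]
    · rw [if_pos hx, Real.rpow_def_of_pos hx]
  rw [hfe]
  refine Measurable.ite (measurableSet_lt measurable_const measurable_id)
    ((Real.measurable_log.mul measurable_const).exp) ?_
  refine Measurable.ite (measurableSet_eq_fun measurable_id measurable_const)
    measurable_const ?_
  exact ((Real.measurable_log.mul measurable_const).exp).mul measurable_const

lemma hardy_ofReal_rpow_two {a : ℝ} (ha : 0 ≤ a) :
    ENNReal.ofReal a ^ (2:ℝ) = ENNReal.ofReal (a ^ (2:ℕ)) := by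
  have h2 : ((2:ℕ):ℝ) = (2:ℝ) := by norm_num
  rw [← h2, ENNReal.rpow_natCast, ← ENNReal.ofReal_pow ha]

lemma hardy_CS (μ c : ℝ) (h : ℝ → ℝ) (hmeas : Measurable h) {y : ℝ} (hy : 0 < y) :
    (∫⁻ x in Ioi y, ENNReal.ofReal |h x|) ^ 2
      ≤ (∫⁻ x in Ioi y, ENNReal.ofReal ((h x)^2 * x ^ c * Real.exp (μ*x)))
        * (∫⁻ x in Ioi y, ENNReal.ofReal (x ^ (-c) * Real.exp (-(μ*x)))) := by
  set f1 : ℝ → ℝ≥0∞ := fun x => ENNReal.ofReal (|h x| * x ^ (c/2) * Real.exp (μ*x/2)) with hf1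
  set f2 : ℝ → ℝ≥0∞ := fun x => ENNReal.ofReal (x ^ (-(c/2)) * Real.exp (-(μ*x)/2)) with hf2
  have hm1 : Measurable f1 :=
    ((hmeas.abs.mul (hardy_measurable_rpow_const (c/2))).mul
      (Real.measurable_exp.comp ((measurable_const.mul measurable_id).div_const 2))).ennreal_ofReal
  have hm2 : Measurable f2 :=
    ((hardy_measurable_rpow_const (-(c/2))).mul
      (Real.measurable_exp.comp (((measurable_const.mul measurable_id).neg).div_const 2))).ennreal_ofReal
  have hconj : Real.HolderConjugate 2 2 := Real.HolderConjugate.two_two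
  have key : ∀ x ∈ Ioi y, ENNReal.ofReal |h x| = (f1 * f2) x := by
    intro x hx
    have hx0 : (0:ℝ) < x := hy.trans hx
    have hn : 0 ≤ |h x| * x ^ (c/2) * Real.exp (μ*x/2) := by positivity
    simp only [hf1, hf2, Pi.mul_apply, ← ENNReal.ofReal_mul hn]
    congr 1
    have e1 : x ^ (c/2) * x ^ (-(c/2)) = 1 := by
      rw [← Real.rpow_add hx0]; simp
    have e2 : Real.exp (μ*x/2) * Real.exp (-(μ*x)/2) = 1 := by
      rw [← Real.exp_add]; ring_nf; exact Real.exp_zero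
    calc |h x| = |h x| * ((x ^ (c/2) * x ^ (-(c/2))) * (Real.exp (μ*x/2) * Real.exp (-(μ*x)/2))) := by
          rw [e1, e2]; ring
      _ = |h x| * x ^ (c/2) * Real.exp (μ*x/2) * (x ^ (-(c/2)) * Real.exp (-(μ*x)/2)) := by ring
  have sq1 : ∀ x ∈ Ioi y, f1 x ^ (2:ℝ) = ENNReal.ofReal ((h x)^2 * x ^ c * Real.exp (μ*x)) := by
    intro x hx
    have hx0 : (0:ℝ) < x := hy.trans hx
    have hn : 0 ≤ |h x| * x ^ (c/2) * Real.exp (μ*x/2) := by positivity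
    show ENNReal.ofReal (|h x| * x ^ (c/2) * Real.exp (μ*x/2)) ^ (2:ℝ) = _
    rw [hardy_ofReal_rpow_two hn]
    congr 1
    have e1 : (x ^ (c/2))^(2:ℕ) = x ^ c := by
      rw [← Real.rpow_natCast (x ^ (c/2)) 2, ← Real.rpow_mul hx0.le]; norm_num
    have e2 : (Real.exp (μ*x/2))^(2:ℕ) = Real.exp (μ*x) := by
      rw [pow_two, ← Real.exp_add]; ring_nf
    rw [mul_pow, mul_pow, sq_abs, e1, e2]
  have sq2 : ∀ x ∈ Ioi y, f2 x ^ (2:ℝ) = ENNReal.ofReal (x ^ (-c) * Real.exp (-(μ*x))) := by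
    intro x hx
    have hx0 : (0:ℝ) < x := hy.trans hx
    have hn : 0 ≤ x ^ (-(c/2)) * Real.exp (-(μ*x)/2) := by positivity
    show ENNReal.ofReal (x ^ (-(c/2)) * Real.exp (-(μ*x)/2)) ^ (2:ℝ) = _
    rw [hardy_ofReal_rpow_two hn]
    congr 1
    have e1 : (x ^ (-(c/2)))^(2:ℕ) = x ^ (-c) := by
      rw [← Real.rpow_natCast (x ^ (-(c/2))) 2, ← Real.rpow_mul hx0.le]; norm_num
    have e2 : (Real.exp (-(μ*x)/2))^(2:ℕ) = Real.exp (-(μ*x)) := by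
      rw [pow_two, ← Real.exp_add]; ring_nf
    rw [mul_pow, e1, e2]
  calc (∫⁻ x in Ioi y, ENNReal.ofReal |h x|) ^ 2
      = (∫⁻ x in Ioi y, (f1 * f2) x) ^ 2 := by
        rw [setLIntegral_congr_fun measurableSet_Ioi key]
    _ ≤ ((∫⁻ x in Ioi y, f1 x ^ (2:ℝ)) ^ (1/(2:ℝ))
          * (∫⁻ x in Ioi y, f2 x ^ (2:ℝ)) ^ (1/(2:ℝ))) ^ 2 := by
        exact pow_le_pow_left₀ zero_le
          (ENNReal.lintegral_mul_le_Lp_mul_Lq _ hconj hm1.aemeasurable hm2.aemeasurable) 2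
    _ = (∫⁻ x in Ioi y, f1 x ^ (2:ℝ)) * (∫⁻ x in Ioi y, f2 x ^ (2:ℝ)) := by
        rw [mul_pow]
        congr 1 <;>
        · rw [← ENNReal.rpow_natCast _ 2, ← ENNReal.rpow_mul]
          norm_num
    _ = (∫⁻ x in Ioi y, ENNReal.ofReal ((h x)^2 * x ^ c * Real.exp (μ*x)))
        * (∫⁻ x in Ioi y, ENNReal.ofReal (x ^ (-c) * Real.exp (-(μ*x)))) := by
        rw [setLIntegral_congr_fun measurableSet_Ioi sq1,
          setLIntegral_congr_fun measurableSet_Ioi sq2]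

theorem hardy_L2_weighted (μ : ℝ) (hμ : 0 ≤ μ) (n : ℕ) (h : ℝ → ℝ)
    (hmeas : Measurable h)
    (hint : IntegrableOn (fun y => (h y)^2 * y^(2*n+2) * Real.exp (μ*y)) (Ioi 0))
    (H : ℝ → ℝ) (hH : ∀ y, H y = ∫ x in Ioi y, h x) :
    ∫ y in Ioi (0:ℝ), (H y)^2 * y^(2*n) * Real.exp (μ*y)
      ≤ 4 * ∫ y in Ioi (0:ℝ), (h y)^2 * y^(2*n+2) * Real.exp (μ*y) := by
  have hn0 : (0:ℝ) ≤ (n:ℝ) := n.cast_nonneg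
  set β : ℝ := (n:ℝ) + 1/2 with hβdef
  set c : ℝ := (n:ℝ) + 3/2 with hcdef
  have hβ : 0 < β := by rw [hβdef]; linarith
  have hc : 1 < c := by rw [hcdef]; linarith
  have hcβ : c - 1 = β := by rw [hβdef, hcdef]; ring
  set V : ℝ → ℝ := fun x => (h x)^2 * x^(2*n+2) * Real.exp (μ*x) with hVdef
  have hVnn : ∀ x, 0 ≤ V x := by
    intro x
    have hp : (0:ℝ) ≤ x^(2*n+2) := Even.pow_nonneg ⟨n+1, by ring⟩ x
    have := sq_nonneg (h x)
    have := Real.exp_nonneg (μ*x)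
    positivity
  set F : ℝ → ℝ≥0∞ := fun x => ENNReal.ofReal ((h x)^2 * x ^ c * Real.exp (μ*x)) with hFdef
  have hFm : Measurable F :=
    (((hmeas.pow_const 2).mul (hardy_measurable_rpow_const c)).mul
      (Real.measurable_exp.comp (measurable_const.mul measurable_id))).ennreal_ofReal
  set g : ℝ → ℝ≥0∞ := fun y => ENNReal.ofReal (y ^ (β-1)) with hgdef
  have hgm : Measurable g := (hardy_measurable_rpow_const (β-1)).ennreal_ofReal
  set T : ℝ → ℝ≥0∞ := fun y => ∫⁻ x in Ioi y, F x with hTdef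
  have hTanti : Antitone T := fun y1 y2 hle => lintegral_mono_set (Ioi_subset_Ioi hle)
  -- the V lintegral
  have hVlint : ∫⁻ x in Ioi (0:ℝ), ENNReal.ofReal (V x)
      = ENNReal.ofReal (∫ x in Ioi (0:ℝ), V x) :=
    (ofReal_integral_eq_lintegral_ofReal hint (ae_of_all _ hVnn)).symm
  have hVint_nn : 0 ≤ ∫ x in Ioi (0:ℝ), V x := integral_nonneg hVnn
  -- pointwise bound on F vs V for x in Ioi a
  have hFV : ∀ a : ℝ, 0 < a → ∀ x ∈ Ioi a,
      F x ≤ ENNReal.ofReal (a ^ (-β)) * ENNReal.ofReal (V x) := by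
    intro a ha x hx
    have hx0 : 0 < x := ha.trans hx
    rw [hFdef, ← ENNReal.ofReal_mul (Real.rpow_nonneg ha.le _)]
    apply ENNReal.ofReal_le_ofReal
    have e1 : x ^ c = x ^ ((2*n+2 : ℕ):ℝ) * x ^ (-β) := by
      rw [← Real.rpow_add hx0]
      congr 1
      rw [hβdef, hcdef]
      push_cast
      ring
    have e2 : x ^ (-β) ≤ a ^ (-β) :=
      Real.rpow_le_rpow_of_nonpos ha hx.le (by linarith)
    have e3 : (0:ℝ) ≤ (h x)^2 * x^(2*n+2) * Real.exp (μ*x) := hVnn x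
    calc (h x)^2 * x ^ c * Real.exp (μ*x)
        = ((h x)^2 * x^(2*n+2) * Real.exp (μ*x)) * x ^ (-β) := by
          rw [e1, Real.rpow_natCast]; ring
      _ ≤ ((h x)^2 * x^(2*n+2) * Real.exp (μ*x)) * a ^ (-β) := by
          exact mul_le_mul_of_nonneg_left e2 e3
      _ = a ^ (-β) * V x := by rw [hVdef]; ring
  have hTfin : ∀ a : ℝ, 0 < a → T a < ⊤ := by
    intro a ha
    calc T a ≤ ∫⁻ x in Ioi a, ENNReal.ofReal (a ^ (-β)) * ENNReal.ofReal (V x) := by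
          refine lintegral_mono_ae ?_
          filter_upwards [ae_restrict_mem measurableSet_Ioi] with x hx
          exact hFV a ha x hx
      _ = ENNReal.ofReal (a ^ (-β)) * ∫⁻ x in Ioi a, ENNReal.ofReal (V x) :=
          lintegral_const_mul' _ _ ENNReal.ofReal_ne_top
      _ ≤ ENNReal.ofReal (a ^ (-β)) * ∫⁻ x in Ioi (0:ℝ), ENNReal.ofReal (V x) := by
          exact mul_le_mul_right (lintegral_mono_set (Ioi_subset_Ioi ha.le)) _
      _ < ⊤ := by
          rw [hVlint]
          exact ENNReal.mul_lt_top ENNReal.ofReal_lt_top ENNReal.ofReal_lt_top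
  -- U bound
  have hU : ∀ y : ℝ, 0 < y →
      (∫⁻ x in Ioi y, ENNReal.ofReal (x ^ (-c) * Real.exp (-(μ*x))))
        ≤ ENNReal.ofReal (Real.exp (-(μ*y)) * (y ^ (1-c) / (c-1))) := by
    intro y hy
    calc (∫⁻ x in Ioi y, ENNReal.ofReal (x ^ (-c) * Real.exp (-(μ*x))))
        ≤ ∫⁻ x in Ioi y, ENNReal.ofReal (Real.exp (-(μ*y))) * ENNReal.ofReal (x ^ (-c)) := by
          refine lintegral_mono_ae ?_
          filter_upwards [ae_restrict_mem measurableSet_Ioi] with x hx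
          rw [← ENNReal.ofReal_mul (Real.exp_nonneg _)]
          apply ENNReal.ofReal_le_ofReal
          have hxy : μ * y ≤ μ * x := mul_le_mul_of_nonneg_left (le_of_lt hx) hμ
          have : Real.exp (-(μ*x)) ≤ Real.exp (-(μ*y)) := Real.exp_le_exp.mpr (by linarith)
          calc x ^ (-c) * Real.exp (-(μ*x)) ≤ x ^ (-c) * Real.exp (-(μ*y)) :=
                mul_le_mul_of_nonneg_left this (Real.rpow_nonneg (hy.trans hx).le _)
            _ = Real.exp (-(μ*y)) * x ^ (-c) := mul_comm _ _
      _ = ENNReal.ofReal (Real.exp (-(μ*y))) * ∫⁻ x in Ioi y, ENNReal.ofReal (x ^ (-c)) :=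
          lintegral_const_mul' _ _ ENNReal.ofReal_ne_top
      _ = ENNReal.ofReal (Real.exp (-(μ*y))) * ENNReal.ofReal (y ^ (1-c) / (c-1)) := by
          rw [hardy_tail_rpow hc hy]
      _ = ENNReal.ofReal (Real.exp (-(μ*y)) * (y ^ (1-c) / (c-1))) :=
          (ENNReal.ofReal_mul (Real.exp_nonneg _)).symm
  -- integrability of h on Ioi a
  have hIntOn : ∀ a : ℝ, 0 < a → IntegrableOn h (Ioi a) := by
    intro a ha
    have hGfin : (∫⁻ x in Ioi a, ENNReal.ofReal |h x|) < ⊤ := by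
      have hCS := hardy_CS μ c h hmeas ha
      have hUa := hU a ha
      have : (∫⁻ x in Ioi a, ENNReal.ofReal |h x|) ^ 2 < ⊤ := by
        refine lt_of_le_of_lt hCS ?_
        exact ENNReal.mul_lt_top (hTfin a ha) (lt_of_le_of_lt hUa ENNReal.ofReal_lt_top)
      by_contra hcon
      rw [not_lt, top_le_iff] at hcon
      rw [hcon] at this
      simp [ENNReal.top_pow] at this
    refine ⟨hmeas.aestronglyMeasurable, ?_⟩
    rw [hasFiniteIntegral_iff_norm]
    simpa [Real.norm_eq_abs] using hGfin
  -- continuity of H on Ioi 0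
  have hHcont : ContinuousOn H (Ioi (0:ℝ)) := by
    intro y0 hy0
    rw [mem_Ioi] at hy0
    set a : ℝ := y0/2 with hadef
    set b : ℝ := y0+1 with hbdef
    have ha : 0 < a := by rw [hadef]; linarith
    have hab : y0 ∈ Ioo a b := ⟨by rw [hadef]; linarith, by rw [hbdef]; linarith⟩
    have hicc : IntegrableOn h (Icc a b) :=
      (hIntOn (a/2) (by linarith)).mono_set (fun z hz => lt_of_lt_of_le (by linarith) hz.1)
    have hprim : ContinuousOn (fun z => ∫ t in Ioc a z, h t) (Icc a b) :=
      intervalIntegral.continuousOn_primitive hicc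
    have hprimAt : ContinuousAt (fun z => H a - ∫ t in Ioc a z, h t) y0 := by
      refine ContinuousAt.sub continuousAt_const ?_
      exact hprim.continuousAt (Icc_mem_nhds hab.1 hab.2)
    have heq : ∀ z ∈ Ioo a b, H z = H a - ∫ t in Ioc a z, h t := by
      intro z hz
      have hsplit : (∫ x in Ioi a, h x) = (∫ x in Ioc a z, h x) + ∫ x in Ioi z, h x := by
        rw [← setIntegral_union (Ioc_disjoint_Ioi le_rfl) measurableSet_Ioi
          ((hIntOn a ha).mono_set Ioc_subset_Ioi_self)
          ((hIntOn a ha).mono_set (Ioi_subset_Ioi hz.1.le)), Ioc_union_Ioi_eq_Ioi hz.1.le]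
      rw [hH z, hH a, hsplit]
      ring
    have hAt : ContinuousAt H y0 := by
      refine hprimAt.congr ?_
      filter_upwards [isOpen_Ioo.mem_nhds hab] with z hz
      exact (heq z hz).symm
    exact hAt.continuousWithinAt
  have hHam : AEMeasurable H (volume.restrict (Ioi (0:ℝ))) :=
    hHcont.aemeasurable measurableSet_Ioi
  -- nonnegativity of LHS integrand
  set W : ℝ → ℝ := fun y => (H y)^2 * y^(2*n) * Real.exp (μ*y) with hWdef
  have hWnn : ∀ y, 0 ≤ W y := by
    intro y
    have hp : (0:ℝ) ≤ y^(2*n) := Even.pow_nonneg ⟨n, by ring⟩ y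
    have := sq_nonneg (H y)
    have := Real.exp_nonneg (μ*y)
    positivity
  have hWaesm : AEStronglyMeasurable W (volume.restrict (Ioi (0:ℝ))) := by
    refine AEMeasurable.aestronglyMeasurable ?_
    exact ((hHam.pow_const 2).mul
      ((measurable_id.pow_const (2*n)).aemeasurable)).mul
      ((Real.measurable_exp.comp (measurable_const.mul measurable_id)).aemeasurable)
  -- Step A : pointwise bound
  have stepA : ∀ y ∈ Ioi (0:ℝ),
      ENNReal.ofReal (W y) ≤ ENNReal.ofReal (1/β) * (g y * T y) := by
    intro y hy
    rw [mem_Ioi] at hy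
    have hG2 : ENNReal.ofReal ((H y)^2) ≤ (∫⁻ x in Ioi y, ENNReal.ofReal |h x|) ^ 2 := by
      have hInt : IntegrableOn (fun x => |h x|) (Ioi y) := (hIntOn y hy).abs
      have hHle : |H y| ≤ ∫ x in Ioi y, |h x| := by
        rw [hH y]
        calc |∫ x in Ioi y, h x| = ‖∫ x in Ioi y, h x‖ := (Real.norm_eq_abs _).symm
          _ ≤ ∫ x in Ioi y, ‖h x‖ := norm_integral_le_integral_norm _
          _ = ∫ x in Ioi y, |h x| := by simp [Real.norm_eq_abs]
      have hG : ENNReal.ofReal (∫ x in Ioi y, |h x|)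
          = ∫⁻ x in Ioi y, ENNReal.ofReal |h x| :=
        ofReal_integral_eq_lintegral_ofReal hInt (ae_of_all _ fun x => abs_nonneg _)
      calc ENNReal.ofReal ((H y)^2) = ENNReal.ofReal (|H y|^2) := by rw [sq_abs]
        _ ≤ ENNReal.ofReal ((∫ x in Ioi y, |h x|)^2) :=
            ENNReal.ofReal_le_ofReal (pow_le_pow_left₀ (abs_nonneg _) hHle 2)
        _ = (ENNReal.ofReal (∫ x in Ioi y, |h x|))^2 :=
            ENNReal.ofReal_pow (integral_nonneg fun x => abs_nonneg _) 2
        _ = (∫⁻ x in Ioi y, ENNReal.ofReal |h x|) ^ 2 := by rw [hG]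
    have hCS := hardy_CS μ c h hmeas hy
    have hUy := hU y hy
    -- the real-number identity
    have hE : Real.exp (-(μ*y)) * (y ^ (1-c) / (c-1)) * (y^(2*n) * Real.exp (μ*y))
        = 1/β * y ^ (β-1) := by
      have h1 : (y:ℝ)^(2*n) = y ^ (((2*n:ℕ)):ℝ) := (Real.rpow_natCast y (2*n)).symm
      have h2 : y ^ (1-c) * y ^ (((2*n:ℕ)):ℝ) = y ^ (β-1) := by
        rw [← Real.rpow_add hy]
        congr 1
        rw [hβdef, hcdef]
        push_cast
        ring
      have hexp : Real.exp (-(μ*y)) * Real.exp (μ*y) = 1 := by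
        rw [← Real.exp_add]; simp
      calc Real.exp (-(μ*y)) * (y ^ (1-c) / (c-1)) * (y^(2*n) * Real.exp (μ*y))
          = (Real.exp (-(μ*y)) * Real.exp (μ*y))
              * ((y ^ (1-c) * y ^ (((2*n:ℕ)):ℝ)) / (c-1)) := by rw [h1]; ring
        _ = 1 * (y ^ (β-1) / β) := by rw [hexp, h2, hcβ]
        _ = 1/β * y ^ (β-1) := by ring
    have hq : (0:ℝ) ≤ y^(2*n) * Real.exp (μ*y) := by
      have hp : (0:ℝ) ≤ y^(2*n) := Even.pow_nonneg ⟨n, by ring⟩ y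
      positivity
    have htail : (0:ℝ) ≤ Real.exp (-(μ*y)) * (y ^ (1-c) / (c-1)) :=
      mul_nonneg (Real.exp_nonneg _)
        (div_nonneg (Real.rpow_nonneg hy.le _) (by linarith))
    calc ENNReal.ofReal (W y)
        = ENNReal.ofReal ((H y)^2) * ENNReal.ofReal (y^(2*n) * Real.exp (μ*y)) := by
          rw [hWdef, ← ENNReal.ofReal_mul (sq_nonneg _)]
          congr 1
          ring
      _ ≤ ((T y) * (∫⁻ x in Ioi y, ENNReal.ofReal (x ^ (-c) * Real.exp (-(μ*x)))))
            * ENNReal.ofReal (y^(2*n) * Real.exp (μ*y)) :=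
          mul_le_mul_left (hG2.trans hCS) _
      _ ≤ ((T y) * ENNReal.ofReal (Real.exp (-(μ*y)) * (y ^ (1-c) / (c-1))))
            * ENNReal.ofReal (y^(2*n) * Real.exp (μ*y)) :=
          mul_le_mul_left (mul_le_mul_right hUy _) _
      _ = T y * ENNReal.ofReal (Real.exp (-(μ*y)) * (y ^ (1-c) / (c-1))
            * (y^(2*n) * Real.exp (μ*y))) := by
          rw [mul_assoc, ← ENNReal.ofReal_mul htail]
      _ = T y * ENNReal.ofReal (1/β * y ^ (β-1)) := by rw [hE]
      _ = ENNReal.ofReal (1/β) * (g y * T y) := by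
          rw [ENNReal.ofReal_mul (by positivity : (0:ℝ) ≤ 1/β), hgdef]
          ring
  -- Step B : the main chain
  have key : (∫⁻ y in Ioi (0:ℝ), ENNReal.ofReal (W y))
      ≤ ENNReal.ofReal (4 * ∫ x in Ioi (0:ℝ), V x) := by
    calc (∫⁻ y in Ioi (0:ℝ), ENNReal.ofReal (W y))
        ≤ ∫⁻ y in Ioi (0:ℝ), ENNReal.ofReal (1/β) * (g y * T y) := by
          refine lintegral_mono_ae ?_
          filter_upwards [ae_restrict_mem measurableSet_Ioi] with y hy
          exact stepA y hy
      _ = ENNReal.ofReal (1/β) * ∫⁻ y in Ioi (0:ℝ), g y * T y :=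
          lintegral_const_mul' _ _ ENNReal.ofReal_ne_top
      _ = ENNReal.ofReal (1/β) * ∫⁻ x in Ioi (0:ℝ), F x * ∫⁻ y in Ioo 0 x, g y := by
          rw [hardy_swap F g hFm hgm]
      _ = ENNReal.ofReal (1/β) * ∫⁻ x in Ioi (0:ℝ),
            ENNReal.ofReal (1/β) * ENNReal.ofReal (V x) := by
          congr 1
          refine setLIntegral_congr_fun measurableSet_Ioi (fun x hx => ?_)
          rw [mem_Ioi] at hx
          rw [hardy_head_rpow hβ hx]
          have hxc : (0:ℝ) ≤ (h x)^2 * x ^ c * Real.exp (μ*x) := by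
            have := Real.rpow_nonneg hx.le c
            positivity
          have e1 : x ^ c * x ^ β = x^(2*n+2) := by
            rw [← Real.rpow_add hx, show c + β = ((2*n+2:ℕ):ℝ) by
              rw [hβdef, hcdef]; push_cast; ring, Real.rpow_natCast]
          have e2 : ((h x)^2 * x ^ c * Real.exp (μ*x)) * (x ^ β / β) = 1/β * V x := by
            rw [hVdef]
            calc ((h x)^2 * x ^ c * Real.exp (μ*x)) * (x ^ β / β)
                = (h x)^2 * (x ^ c * x ^ β) * Real.exp (μ*x) * (1/β) := by ring
              _ = (h x)^2 * x^(2*n+2) * Real.exp (μ*x) * (1/β) := by rw [e1]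
              _ = 1/β * ((h x)^2 * x^(2*n+2) * Real.exp (μ*x)) := by ring
          show ENNReal.ofReal ((h x)^2 * x ^ c * Real.exp (μ*x)) * ENNReal.ofReal (x ^ β / β) = _
          rw [← ENNReal.ofReal_mul hxc, e2,
            ENNReal.ofReal_mul (by positivity : (0:ℝ) ≤ 1/β)]
      _ = ENNReal.ofReal (1/β) * (ENNReal.ofReal (1/β)
            * ∫⁻ x in Ioi (0:ℝ), ENNReal.ofReal (V x)) := by
          rw [lintegral_const_mul' _ _ ENNReal.ofReal_ne_top]
      _ = ENNReal.ofReal (1/β * (1/β * ∫ x in Ioi (0:ℝ), V x)) := by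
          rw [hVlint, ← ENNReal.ofReal_mul (by positivity : (0:ℝ) ≤ 1/β),
            ← ENNReal.ofReal_mul (by positivity : (0:ℝ) ≤ 1/β)]
      _ ≤ ENNReal.ofReal (4 * ∫ x in Ioi (0:ℝ), V x) := by
          apply ENNReal.ofReal_le_ofReal
          have hinv : 1/β ≤ 2 := by
            rw [hβdef, div_le_iff₀ (by linarith : (0:ℝ) < (n:ℝ)+1/2)]
            linarith
          have h1βnn : (0:ℝ) ≤ 1/β := by positivity
          nlinarith [hVint_nn, mul_le_mul hinv hinv h1βnn (by norm_num : (0:ℝ) ≤ 2)]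
  -- conclude
  rw [show (∫ y in Ioi (0:ℝ), (H y)^2 * y^(2*n) * Real.exp (μ*y)) = ∫ y in Ioi (0:ℝ), W y from rfl,
    integral_eq_lintegral_of_nonneg_ae (ae_of_all _ hWnn) hWaesm]
  exact ENNReal.toReal_le_of_le_ofReal (by positivity) key
end

section
/- Let μ > 0 and h ∈ L²((0,∞), e^{μy} dy). Define H(y) = ∫_y^∞ h(x) dx. Then ∫₀^∞ H(y)² e^{μy} dy ≤ (4/μ²) ∫₀^∞ h(y)² e^{μy} dy. -/
open MeasureTheory Real Set
open scoped ENNReal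

private lemma exp_neg_integral_Ioi (c y : ℝ) (hc : 0 < c) :
    ∫ x in Ioi y, Real.exp (-(c*x)) = Real.exp (-(c*y)) / c := by
  have hderiv : ∀ x ∈ Ici y,
      HasDerivAt (fun x => -Real.exp (-(c*x)) / c) (Real.exp (-(c*x))) x := by
    intro x _
    have h1 : HasDerivAt (fun x : ℝ => -(c*x)) (-c) x := by
      simpa [neg_mul] using ((hasDerivAt_id x).const_mul (-c))
    have h3 := (h1.exp.neg).div_const c
    convert h3 using 1
    · rfl
    · rfl
    · rfl
    · field_simp
  have hint : IntegrableOn (fun x => Real.exp (-(c*x))) (Ioi y) := by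
    simpa [neg_mul] using exp_neg_integrableOn_Ioi y hc
  have htend : Filter.Tendsto (fun x => -Real.exp (-(c*x)) / c)
      Filter.atTop (nhds 0) := by
    have h0 : Filter.Tendsto (fun x : ℝ => c * x) Filter.atTop Filter.atTop :=
      Filter.Tendsto.const_mul_atTop hc Filter.tendsto_id
    have h1 := tendsto_exp_neg_atTop_nhds_zero.comp h0
    have h2 := (h1.neg).div_const c
    simpa [Function.comp] using h2
  have := integral_Ioi_of_hasDerivAt_of_tendsto' hderiv hint htend
  rw [this]; ring

private lemma lint_exp_neg_Ioi (c y : ℝ) (hc : 0 < c) :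
    ∫⁻ x in Ioi y, ENNReal.ofReal (Real.exp (-(c*x)))
      = ENNReal.ofReal (Real.exp (-(c*y)) / c) := by
  rw [← ofReal_integral_eq_lintegral_ofReal
      (by have := exp_neg_integrableOn_Ioi y hc; simp only [neg_mul] at this; exact this)
      (Filter.Eventually.of_forall fun x => (Real.exp_pos _).le),
    exp_neg_integral_Ioi c y hc]

private lemma exp_integral_Ioo (c x : ℝ) (hc : 0 < c) (hx : 0 < x) :
    ∫ y in Ioo 0 x, Real.exp (c*y) = (Real.exp (c*x) - 1)/c := by
  rw [← integral_Ioc_eq_integral_Ioo, ← intervalIntegral.integral_of_le hx.le,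
    intervalIntegral.integral_comp_mul_left (fun u => Real.exp u) (ne_of_gt hc)]
  simp [integral_exp, smul_eq_mul]
  ring

private lemma lint_exp_Ioo (c x : ℝ) (hc : 0 < c) :
    ∫⁻ y in Ioo 0 x, ENNReal.ofReal (Real.exp (c*y) / c)
      ≤ ENNReal.ofReal (Real.exp (c*x) / c^2) := by
  rcases le_or_gt x 0 with hx | hx
  · rw [Ioo_eq_empty (by exact fun h => absurd (h.trans_le hx) (lt_irrefl 0))]
    simp
  · have hint : IntegrableOn (fun y => Real.exp (c*y) / c) (Ioo 0 x) := by
    -- continuous on compact Icc, restrict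
      have hcont : Continuous (fun y : ℝ => Real.exp (c*y) / c) := by
        continuity
      exact (hcont.integrableOn_Icc (a := 0) (b := x)).mono_set Ioo_subset_Icc_self
    rw [← ofReal_integral_eq_lintegral_ofReal hint
      (Filter.Eventually.of_forall fun y => by positivity)]
    apply ENNReal.ofReal_le_ofReal
    rw [integral_div, exp_integral_Ioo c x hc hx]
    rw [div_div, ← sq]
    have h1 : Real.exp (c*x) - 1 ≤ Real.exp (c*x) := by linarith
    have h2 : (0:ℝ) < c^2 := by positivity
    exact div_le_div_of_nonneg_right h1 h2.le

private lemma cs_step (h : ℝ → ℝ) (hmeas : Measurable h) (c y : ℝ) (hc : 0 < c) :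
    (∫⁻ x in Ioi y, ENNReal.ofReal |h x|)^2
      ≤ (∫⁻ x in Ioi y, ENNReal.ofReal ((h x)^2 * Real.exp (c*x)))
        * ENNReal.ofReal (Real.exp (-(c*y)) / c) := by
  set ν := volume.restrict (Ioi y)
  set f : ℝ → ℝ≥0∞ := fun x => ENNReal.ofReal (|h x| * Real.exp (c/2*x)) with hf
  set g : ℝ → ℝ≥0∞ := fun x => ENNReal.ofReal (Real.exp (-(c/2*x))) with hg
  have hfm : Measurable f :=
    ((hmeas.abs.mul (Real.measurable_exp.comp (measurable_id.const_mul (c/2))))).ennreal_ofReal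
  have hgm : Measurable g :=
    (Real.measurable_exp.comp (measurable_id.const_mul (c/2)).neg).ennreal_ofReal
  have hpq : (2:ℝ).HolderConjugate 2 := ⟨by norm_num, by norm_num, by norm_num⟩
  have key := ENNReal.lintegral_mul_le_Lp_mul_Lq ν hpq hfm.aemeasurable hgm.aemeasurable
  have hfg : ∀ x, ENNReal.ofReal |h x| = (f * g) x := by
    intro x
    simp only [Pi.mul_apply, hf, hg]
    rw [← ENNReal.ofReal_mul (by positivity)]
    congr 1
    rw [mul_assoc, ← Real.exp_add]
    simp
  have hsq : ∀ z : ℝ≥0∞, z ^ (2:ℝ) = z^2 := by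
    intro z
    rw [show (2:ℝ) = ((2:ℕ):ℝ) by norm_num, ENNReal.rpow_natCast]
  have sqhalf : ∀ A : ℝ≥0∞, (A ^ (1/2:ℝ))^2 = A := by
    intro A
    rw [← ENNReal.rpow_natCast (A ^ (1/2:ℝ)) 2, ← ENNReal.rpow_mul]
    norm_num
  have hf2 : ∀ x, f x ^ (2:ℝ) = ENNReal.ofReal ((h x)^2 * Real.exp (c*x)) := by
    intro x
    rw [hsq, ← ENNReal.ofReal_pow (by positivity)]
    congr 1
    have hcc : c/2*x + c/2*x = c*x := by ring
    rw [mul_pow, sq_abs, pow_two (Real.exp _), ← Real.exp_add, hcc]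
  have hg2 : ∀ x, g x ^ (2:ℝ) = ENNReal.ofReal (Real.exp (-(c*x))) := by
    intro x
    rw [hsq, ← ENNReal.ofReal_pow (Real.exp_pos _).le]
    congr 1
    have hcc : -(c/2*x) + -(c/2*x) = -(c*x) := by ring
    rw [pow_two, ← Real.exp_add, hcc]
  calc (∫⁻ x in Ioi y, ENNReal.ofReal |h x|)^2
      = (∫⁻ x, (f*g) x ∂ν)^2 := by rw [lintegral_congr hfg]
    _ ≤ ((∫⁻ a, f a ^ (2:ℝ) ∂ν) ^ (1/2:ℝ) * (∫⁻ a, g a ^ (2:ℝ) ∂ν) ^ (1/2:ℝ))^2 :=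
        pow_le_pow_left₀ (by positivity) key 2
    _ = (∫⁻ a, f a ^ (2:ℝ) ∂ν) * (∫⁻ a, g a ^ (2:ℝ) ∂ν) := by
        rw [mul_pow, sqhalf, sqhalf]
    _ = _ := by
        rw [lintegral_congr hf2, lintegral_congr hg2, lint_exp_neg_Ioi c y hc]

theorem weighted_poincare (μ : ℝ) (hμ : 0 < μ) (h : ℝ → ℝ)
    (hmeas : Measurable h)
    (hint : IntegrableOn (fun y => (h y)^2 * Real.exp (μ*y)) (Ioi 0))
    (H : ℝ → ℝ) (hH : ∀ y, H y = ∫ x in Ioi y, h x) :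
    ∫ y in Ioi (0:ℝ), (H y)^2 * Real.exp (μ*y)
      ≤ (4/μ^2) * ∫ y in Ioi (0:ℝ), (h y)^2 * Real.exp (μ*y) := by
  have hJnn : 0 ≤ ∫ y in Ioi (0:ℝ), (h y)^2 * Real.exp (μ*y) :=
    setIntegral_nonneg measurableSet_Ioi (fun y _ => by positivity)
  by_cases hsm : AEStronglyMeasurable (fun y => (H y)^2 * Real.exp (μ*y))
      (volume.restrict (Ioi 0))
  swap
  · rw [integral_undef (fun hi => hsm hi.1)]
    have h4 : (0:ℝ) ≤ 4/μ^2 := by positivity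
    exact mul_nonneg h4 hJnn
  set c := μ/2 with hcdef
  have hc : 0 < c := by rw [hcdef]; positivity
  set G : ℝ → ℝ≥0∞ := fun x => ENNReal.ofReal ((h x)^2 * Real.exp (c*x)) with hGdef
  have hGm : Measurable G :=
    ((hmeas.pow measurable_const).mul
      (Real.measurable_exp.comp (measurable_id.const_mul c))).ennreal_ofReal
  have hEm : Measurable (fun y : ℝ => ENNReal.ofReal (Real.exp (c*y) / c)) :=
    ((Real.measurable_exp.comp (measurable_id.const_mul c)).div_const c).ennreal_ofReal
  -- Step A: pointwise bound
  have stepA : ∀ y : ℝ, ENNReal.ofReal ((H y)^2 * Real.exp (μ*y))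
      ≤ (∫⁻ x in Ioi y, G x) * ENNReal.ofReal (Real.exp (c*y) / c) := by
    intro y
    set L := ∫⁻ x in Ioi y, ENNReal.ofReal |h x| with hL
    have h1 : |H y| ≤ L.toReal := by
      rw [hH y]
      simpa [Real.norm_eq_abs] using
        norm_integral_le_lintegral_norm (μ := volume.restrict (Ioi y)) h
    have h2 : ENNReal.ofReal ((H y)^2) ≤ L^2 := by
      rw [← sq_abs, ENNReal.ofReal_pow (abs_nonneg _)]
      exact pow_le_pow_left₀ (by positivity)
        ((ENNReal.ofReal_le_ofReal h1).trans ENNReal.ofReal_toReal_le) 2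
    have h3 : ENNReal.ofReal ((H y)^2)
        ≤ (∫⁻ x in Ioi y, G x) * ENNReal.ofReal (Real.exp (-(c*y)) / c) :=
      h2.trans (cs_step h hmeas c y hc)
    calc ENNReal.ofReal ((H y)^2 * Real.exp (μ*y))
        = ENNReal.ofReal ((H y)^2) * ENNReal.ofReal (Real.exp (μ*y)) :=
          ENNReal.ofReal_mul (sq_nonneg _)
      _ ≤ (∫⁻ x in Ioi y, G x) * ENNReal.ofReal (Real.exp (-(c*y)) / c)
            * ENNReal.ofReal (Real.exp (μ*y)) := mul_le_mul_left h3 _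
      _ = (∫⁻ x in Ioi y, G x) * ENNReal.ofReal (Real.exp (c*y) / c) := by
          rw [mul_assoc, ← ENNReal.ofReal_mul (by positivity)]
          congr 2
          rw [div_mul_eq_mul_div, ← Real.exp_add,
            show -(c*y) + μ*y = c*y by rw [hcdef]; ring]
  -- the kernel for Tonelli
  set K : ℝ → ℝ → ℝ≥0∞ := fun y x =>
    if y < x then G x * ENNReal.ofReal (Real.exp (c*y) / c) else 0 with hKdef
  have hKm : AEMeasurable (Function.uncurry K)
      (((volume.restrict (Ioi (0:ℝ))).prod volume)) := by
    apply Measurable.aemeasurable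
    apply Measurable.ite (measurableSet_lt measurable_fst measurable_snd)
    · exact (hGm.comp measurable_snd).mul (hEm.comp measurable_fst)
    · exact measurable_const
  have houter : ∀ y : ℝ, (∫⁻ x in Ioi y, G x) * ENNReal.ofReal (Real.exp (c*y) / c)
      = ∫⁻ x, K y x := by
    intro y
    rw [← lintegral_mul_const _ hGm, ← lintegral_indicator measurableSet_Ioi]
    apply lintegral_congr
    intro x
    simp [hKdef, indicator_apply, mem_Ioi]
  have hinner : ∀ x : ℝ, (∫⁻ y in Ioi (0:ℝ), K y x)
      ≤ (Ioi (0:ℝ)).indicator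
          (fun x => G x * ENNReal.ofReal (Real.exp (c*x) / c^2)) x := by
    intro x
    have heq : (∫⁻ y in Ioi (0:ℝ), K y x)
        = G x * ∫⁻ y in Ioo (0:ℝ) x, ENNReal.ofReal (Real.exp (c*y) / c) := by
      have : ∀ y : ℝ, K y x
          = (Iio x).indicator (fun y => G x * ENNReal.ofReal (Real.exp (c*y) / c)) y := by
        intro y; simp [hKdef, indicator_apply, mem_Iio]
      rw [lintegral_congr this, lintegral_indicator measurableSet_Iio,
        Measure.restrict_restrict measurableSet_Iio, Set.Iio_inter_Ioi,
        lintegral_const_mul _ hEm]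
    rcases lt_or_ge 0 x with hx | hx
    · rw [heq, indicator_of_mem (mem_Ioi.2 hx)]
      exact mul_le_mul_right (lint_exp_Ioo c x hc) _
    · rw [heq, Ioo_eq_empty (fun hlt => absurd (hlt.trans_le hx) (lt_irrefl 0))]
      simp
  -- the lintegral inequality
  have main : (∫⁻ y in Ioi (0:ℝ), ENNReal.ofReal ((H y)^2 * Real.exp (μ*y)))
      ≤ ENNReal.ofReal (4/μ^2)
        * ∫⁻ x in Ioi (0:ℝ), ENNReal.ofReal ((h x)^2 * Real.exp (μ*x)) := by
    calc ∫⁻ y in Ioi (0:ℝ), ENNReal.ofReal ((H y)^2 * Real.exp (μ*y))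
        ≤ ∫⁻ y in Ioi (0:ℝ), (∫⁻ x in Ioi y, G x) * ENNReal.ofReal (Real.exp (c*y) / c) :=
          lintegral_mono (fun y => stepA y)
      _ = ∫⁻ y in Ioi (0:ℝ), ∫⁻ x, K y x := by
          exact lintegral_congr (fun y => houter y)
      _ = ∫⁻ x, ∫⁻ y in Ioi (0:ℝ), K y x := lintegral_lintegral_swap hKm
      _ ≤ ∫⁻ x, (Ioi (0:ℝ)).indicator
            (fun x => G x * ENNReal.ofReal (Real.exp (c*x) / c^2)) x :=
          lintegral_mono hinner
      _ = ∫⁻ x in Ioi (0:ℝ), G x * ENNReal.ofReal (Real.exp (c*x) / c^2) :=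
          lintegral_indicator measurableSet_Ioi _
      _ = ∫⁻ x in Ioi (0:ℝ), ENNReal.ofReal (4/μ^2)
            * ENNReal.ofReal ((h x)^2 * Real.exp (μ*x)) := by
          apply lintegral_congr
          intro x
          rw [hGdef]
          rw [← ENNReal.ofReal_mul (by positivity), ← ENNReal.ofReal_mul (by positivity)]
          congr 1
          have hμx : Real.exp (c*x) * Real.exp (c*x) = Real.exp (μ*x) := by
            rw [← Real.exp_add]; congr 1; rw [hcdef]; ring
          have hcc : 4/μ^2 = 1/c^2 := by
            rw [hcdef]
            field_simp
            norm_num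
          rw [hcc]
          have harr : (h x)^2 * Real.exp (c*x) * (Real.exp (c*x)/c^2)
              = 1/c^2 * ((h x)^2 * (Real.exp (c*x) * Real.exp (c*x))) := by ring
          rw [harr, hμx]
      _ = ENNReal.ofReal (4/μ^2)
            * ∫⁻ x in Ioi (0:ℝ), ENNReal.ofReal ((h x)^2 * Real.exp (μ*x)) :=
          lintegral_const_mul' _ _ ENNReal.ofReal_ne_top
  -- conclude
  have hnnH : 0 ≤ᵐ[volume.restrict (Ioi (0:ℝ))] fun y => (H y)^2 * Real.exp (μ*y) :=
    Filter.Eventually.of_forall (fun y => by positivity)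
  have hnnh : 0 ≤ᵐ[volume.restrict (Ioi (0:ℝ))] fun y => (h y)^2 * Real.exp (μ*y) :=
    Filter.Eventually.of_forall (fun y => by positivity)
  rw [integral_eq_lintegral_of_nonneg_ae hnnH hsm]
  have hJ : ENNReal.ofReal (∫ y in Ioi (0:ℝ), (h y)^2 * Real.exp (μ*y))
      = ∫⁻ y in Ioi (0:ℝ), ENNReal.ofReal ((h y)^2 * Real.exp (μ*y)) :=
    ofReal_integral_eq_lintegral_ofReal hint hnnh
  have hle : (∫⁻ y in Ioi (0:ℝ), ENNReal.ofReal ((H y)^2 * Real.exp (μ*y)))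
      ≤ ENNReal.ofReal (4/μ^2)
        * ENNReal.ofReal (∫ y in Ioi (0:ℝ), (h y)^2 * Real.exp (μ*y)) := by
    rw [hJ]; exact main
  calc (∫⁻ y in Ioi (0:ℝ), ENNReal.ofReal ((H y)^2 * Real.exp (μ*y))).toReal
      ≤ (ENNReal.ofReal (4/μ^2)
          * ENNReal.ofReal (∫ y in Ioi (0:ℝ), (h y)^2 * Real.exp (μ*y))).toReal :=
        ENNReal.toReal_mono
          (ENNReal.mul_ne_top ENNReal.ofReal_ne_top ENNReal.ofReal_ne_top) hle
    _ = (4/μ^2) * ∫ y in Ioi (0:ℝ), (h y)^2 * Real.exp (μ*y) := by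
        rw [ENNReal.toReal_mul, ENNReal.toReal_ofReal (by positivity),
          ENNReal.toReal_ofReal hJnn]
end

section
/- Let g, h ∈ L¹(0,∞) and define the coagulation operator C(g,h)(y) = (1/2)∫₀^y g(x)h(y−x) dx − (1/2) g(y)∫₀^∞ h − (1/2) h(y)∫₀^∞ g, and tail primitive H(y) = ∫_y^∞ h(x) dx. Then for every y > 0, 2 ∫_y^∞ C(g,h)(x) dx = ∫₀^y g(x) H(y−x) dx − H(y) ∫₀^∞ g(x) dx. -/
open MeasureTheory Real Set

/-- The constant-kernel coagulation bilinear operator. -/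
noncomputable def coagOp (g h : ℝ → ℝ) (y : ℝ) : ℝ :=
  (1/2) * (∫ x in (0:ℝ)..y, g x * h (y-x))
    - (1/2) * g y * (∫ x in Ioi (0:ℝ), h x)
    - (1/2) * h y * (∫ x in Ioi (0:ℝ), g x)

theorem primitive_coagOp (g h : ℝ → ℝ)
    (hg : IntegrableOn g (Ioi 0)) (hh : IntegrableOn h (Ioi 0))
    (H : ℝ → ℝ) (hH : ∀ y, H y = ∫ x in Ioi y, h x) :
    ∀ y > (0:ℝ),
      2 * (∫ x in Ioi y, coagOp g h x)
        = (∫ x in (0:ℝ)..y, g x * H (y-x)) - H y * (∫ x in Ioi (0:ℝ), g x) := by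
  intro y hy
  set g0 : ℝ → ℝ := (Ioi (0:ℝ)).indicator g with hg0def
  set h0 : ℝ → ℝ := (Ioi (0:ℝ)).indicator h with hh0def
  have hg0 : Integrable g0 := (integrable_indicator_iff measurableSet_Ioi).mpr hg
  have hh0 : Integrable h0 := (integrable_indicator_iff measurableSet_Ioi).mpr hh
  have hg0z : ∀ t : ℝ, t ≤ 0 → g0 t = 0 := fun t ht =>
    indicator_of_notMem (by simpa using ht) g
  have hh0z : ∀ t : ℝ, t ≤ 0 → h0 t = 0 := fun t ht =>
    indicator_of_notMem (by simpa using ht) h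
  -- product integrability of the convolution integrand
  have hprod : Integrable (fun p : ℝ × ℝ => g0 p.2 * h0 (p.1 - p.2))
      (volume.prod volume) := by
    have := hg0.convolution_integrand (ContinuousLinearMap.mul ℝ ℝ) hh0
    simpa using this
  set conv : ℝ → ℝ := fun x => ∫ t : ℝ, g0 t * h0 (x - t) with hconvdef
  have hconvInt : Integrable conv := by
    have := hprod.integral_prod_left
    simpa [hconvdef] using this
  -- H0 : tail of h0
  set H0 : ℝ → ℝ := fun s => ∫ x in Ioi s, h0 x with hH0def
  have hH0_nonneg : ∀ s : ℝ, 0 ≤ s → H0 s = ∫ x in Ioi s, h x := by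
    intro s hs
    rw [hH0def]
    simp only [hh0def]
    rw [setIntegral_indicator measurableSet_Ioi, Ioi_inter_Ioi, max_eq_left hs]
  have hH0_nonpos : ∀ s : ℝ, s ≤ 0 → H0 s = ∫ x in Ioi (0:ℝ), h x := by
    intro s hs
    rw [hH0def]
    simp only [hh0def]
    rw [setIntegral_indicator measurableSet_Ioi, Ioi_inter_Ioi, max_eq_right hs]
  -- conv equals the interval integral for positive x
  have hconv_eq : ∀ x : ℝ, 0 < x → conv x = ∫ t in (0:ℝ)..x, g t * h (x - t) := by
    intro x hx
    have hfun : (fun t : ℝ => g0 t * h0 (x - t))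
        = (Ioo (0:ℝ) x).indicator (fun t => g t * h (x - t)) := by
      funext t
      by_cases ht : t ∈ Ioo (0:ℝ) x
      · rw [indicator_of_mem ht]
        have h1 : g0 t = g t := indicator_of_mem ht.1 g
        have h2 : h0 (x - t) = h (x - t) := indicator_of_mem (by simp [ht.2]) h
        rw [h1, h2]
      · rw [indicator_of_notMem ht]
        rcases lt_or_ge (0:ℝ) t with h1 | h1
        · have h2 : x ≤ t := by
            by_contra h3
            exact ht ⟨h1, lt_of_not_ge h3⟩
          rw [hh0z (x - t) (by linarith), mul_zero]
        · rw [hg0z t h1, zero_mul]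
    rw [hconvdef]
    simp only [hfun]
    rw [integral_indicator measurableSet_Ioo, ← integral_Ioc_eq_integral_Ioo,
      intervalIntegral.integral_of_le hx.le]
  -- translation identity for the inner integral
  have hinner : ∀ t : ℝ, (∫ x in Ioi y, g0 t * h0 (x - t)) = g0 t * H0 (y - t) := by
    intro t
    rw [integral_const_mul]
    congr 1
    have hfun : (Ioi y).indicator (fun x => h0 (x - t))
        = fun x => (Ioi (y - t)).indicator h0 (x - t) := by
      funext x
      by_cases hx : x ∈ Ioi y
      · rw [indicator_of_mem hx, indicator_of_mem (by simp only [mem_Ioi] at *; linarith)]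
      · rw [indicator_of_notMem hx, indicator_of_notMem]
        simp only [mem_Ioi] at *; intro hc; exact hx (by linarith)
    calc (∫ x in Ioi y, h0 (x - t))
        = ∫ x, (Ioi y).indicator (fun x => h0 (x - t)) x := by
          rw [integral_indicator measurableSet_Ioi]
      _ = ∫ x, (Ioi (y - t)).indicator h0 (x - t) := by rw [hfun]
      _ = ∫ x, (Ioi (y - t)).indicator h0 x := by
          exact integral_sub_right_eq_self ((Ioi (y - t)).indicator h0) t
      _ = H0 (y - t) := by rw [integral_indicator measurableSet_Ioi]
  -- Fubini on the restricted product
  have hprodR : Integrable (fun p : ℝ × ℝ => g0 p.2 * h0 (p.1 - p.2))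
      ((volume.restrict (Ioi y)).prod volume) := by
    rw [Measure.restrict_prod_eq_prod_univ]
    exact hprod.integrableOn
  have hswap : (∫ x in Ioi y, conv x) = ∫ t : ℝ, g0 t * H0 (y - t) := by
    have h1 : (∫ x in Ioi y, ∫ t : ℝ, g0 t * h0 (x - t))
        = ∫ t : ℝ, ∫ x in Ioi y, g0 t * h0 (x - t) :=
      integral_integral_swap hprodR
    rw [hconvdef]
    simp only [h1]
    exact integral_congr_ae (Filter.Eventually.of_forall fun t => hinner t)
  -- marginal integrability
  have hmarg : Integrable (fun t : ℝ => g0 t * H0 (y - t)) := by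
    have h1 := hprodR.integral_prod_right
    exact h1.congr (Filter.Eventually.of_forall fun t => hinner t)
  -- split the t-integral
  have hsplit : (∫ t : ℝ, g0 t * H0 (y - t))
      = (∫ t in (0:ℝ)..y, g t * H (y - t))
        + (∫ t in Ioi y, g t) * (∫ x in Ioi (0:ℝ), h x) := by
    have hindic : (fun t : ℝ => g0 t * H0 (y - t))
        = (Ioi (0:ℝ)).indicator (fun t => g t * H0 (y - t)) := by
      funext t
      by_cases ht : t ∈ Ioi (0:ℝ)
      · rw [indicator_of_mem ht, hg0def, indicator_of_mem ht]
      · rw [indicator_of_notMem ht, hg0z t (by simpa using ht), zero_mul]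
    have hIomem : IntegrableOn (fun t => g t * H0 (y - t)) (Ioi (0:ℝ)) := by
      rw [← integrable_indicator_iff measurableSet_Ioi, ← hindic]
      exact hmarg
    have hunion : Ioc (0:ℝ) y ∪ Ioi y = Ioi (0:ℝ) := Ioc_union_Ioi_eq_Ioi hy.le
    have h2 : (∫ t : ℝ, g0 t * H0 (y - t)) = ∫ t in Ioi (0:ℝ), g t * H0 (y - t) := by
      rw [hindic, integral_indicator measurableSet_Ioi]
    have h3 : (∫ t in Ioi (0:ℝ), g t * H0 (y - t))
        = (∫ t in Ioc (0:ℝ) y, g t * H0 (y - t)) + ∫ t in Ioi y, g t * H0 (y - t) := by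
      rw [← hunion]
      exact setIntegral_union Ioc_disjoint_Ioi_same measurableSet_Ioi
        (hIomem.mono_set (by rw [← hunion]; exact subset_union_left))
        (hIomem.mono_set (by rw [← hunion]; exact subset_union_right))
    have h4 : (∫ t in Ioc (0:ℝ) y, g t * H0 (y - t)) = ∫ t in (0:ℝ)..y, g t * H (y - t) := by
      rw [intervalIntegral.integral_of_le hy.le]
      apply setIntegral_congr_fun measurableSet_Ioc
      intro t ht
      show g t * H0 (y - t) = g t * H (y - t)
      rw [hH0_nonneg (y - t) (by simp only [mem_Ioc] at ht; linarith), hH (y - t)]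
    have h5 : (∫ t in Ioi y, g t * H0 (y - t))
        = (∫ t in Ioi y, g t) * (∫ x in Ioi (0:ℝ), h x) := by
      have heq : ∀ t ∈ Ioi y, g t * H0 (y - t) = g t * (∫ x in Ioi (0:ℝ), h x) := by
        intro t ht
        show g t * H0 (y - t) = g t * (∫ x in Ioi (0:ℝ), h x)
        rw [hH0_nonpos (y - t) (by simp only [mem_Ioi] at ht; linarith)]
      rw [setIntegral_congr_fun measurableSet_Ioi heq, integral_mul_const]
    rw [h2, h3, h4, h5]
  -- pieces integrable on `Ioi y`
  have hIoiy : Ioi y ⊆ Ioi (0:ℝ) := Ioi_subset_Ioi hy.le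
  have hgI : IntegrableOn g (Ioi y) := hg.mono_set hIoiy
  have hhI : IntegrableOn h (Ioi y) := hh.mono_set hIoiy
  set Ch : ℝ := ∫ x in Ioi (0:ℝ), h x with hChdef
  set Cg : ℝ := ∫ x in Ioi (0:ℝ), g x with hCgdef
  -- rewrite the integral of coagOp
  have hcoag : (∫ x in Ioi y, coagOp g h x)
      = (1/2) * ((∫ x in Ioi y, conv x) - (∫ x in Ioi y, g x) * Ch
          - (∫ x in Ioi y, h x) * Cg) := by
    have hcongr : (∫ x in Ioi y, coagOp g h x)
        = ∫ x in Ioi y, ((1/2) * conv x - (1/2) * g x * Ch - (1/2) * h x * Cg) := by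
      apply setIntegral_congr_fun measurableSet_Ioi
      intro x hx
      have hx0 : 0 < x := lt_trans hy hx
      show coagOp g h x = (1/2) * conv x - (1/2) * g x * Ch - (1/2) * h x * Cg
      rw [coagOp, ← hconv_eq x hx0]
    have hA : IntegrableOn (fun x => (1/2 : ℝ) * conv x) (Ioi y) :=
      (hconvInt.integrableOn).const_mul _
    have hB : IntegrableOn (fun x => (1/2 : ℝ) * g x * Ch) (Ioi y) := by
      have heq : (fun x => (1/2 : ℝ) * g x * Ch) = fun x => ((1/2) * Ch) * g x := by
        funext x; ring
      rw [heq]; exact hgI.const_mul _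
    have hC : IntegrableOn (fun x => (1/2 : ℝ) * h x * Cg) (Ioi y) := by
      have heq : (fun x => (1/2 : ℝ) * h x * Cg) = fun x => ((1/2) * Cg) * h x := by
        funext x; ring
      rw [heq]; exact hhI.const_mul _
    have hAB : IntegrableOn (fun x => (1/2 : ℝ) * conv x - (1/2) * g x * Ch) (Ioi y) :=
      hA.sub hB
    rw [hcongr]
    rw [show (∫ x in Ioi y, ((1/2 : ℝ) * conv x - (1/2) * g x * Ch - (1/2) * h x * Cg))
        = (∫ x in Ioi y, ((1/2 : ℝ) * conv x - (1/2) * g x * Ch)) -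
          ∫ x in Ioi y, (1/2 : ℝ) * h x * Cg from integral_sub hAB hC]
    rw [integral_sub hA hB]
    have e1 : (∫ x in Ioi y, (1/2 : ℝ) * conv x) = (1/2) * ∫ x in Ioi y, conv x :=
      integral_const_mul _ _
    have e2 : (∫ x in Ioi y, (1/2 : ℝ) * g x * Ch)
        = (1/2) * ((∫ x in Ioi y, g x) * Ch) := by
      rw [show (fun x => (1/2 : ℝ) * g x * Ch) = fun x => ((1/2) * Ch) * g x by
        funext x; ring]
      rw [integral_const_mul]; ring
    have e3 : (∫ x in Ioi y, (1/2 : ℝ) * h x * Cg)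
        = (1/2) * ((∫ x in Ioi y, h x) * Cg) := by
      rw [show (fun x => (1/2 : ℝ) * h x * Cg) = fun x => ((1/2) * Cg) * h x by
        funext x; ring]
      rw [integral_const_mul]; ring
    rw [e1, e2, e3]; ring
  have hHy : (∫ x in Ioi y, h x) = H y := (hH y).symm
  rw [hcoag, hswap, hsplit, hHy]
  ring
end

section
/- Fix ρ > 0 and let g_ρ(y) = (4/ρ) e^{−2y/ρ}. For h a C¹ function with compact support in (0,∞), define Lh(y) = 2h(y) + y h'(y) + 2C(g_ρ, h)(y), where C is the constant-kernel coagulation bilinear operator, and let H(y) = ∫_y^∞ h. Then for every y > 0, ∫_y^∞ Lh(x) dx = −H(y) − y h(y) + (g_ρ * H)(y), where (g_ρ * H)(y) = ∫₀^y g_ρ(x) H(y−x) dx. -/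
open MeasureTheory Real Set Filter

theorem primitive_linearized_op (ρ : ℝ) (hρ : 0 < ρ)
    (gρ : ℝ → ℝ) (hgρ : ∀ y, gρ y = (4/ρ) * Real.exp (-2*y/ρ))
    (h : ℝ → ℝ) (hC1 : ContDiff ℝ 1 h) (hcs : HasCompactSupport h)
    (hsupp : tsupport h ⊆ Ioi 0)
    (H : ℝ → ℝ) (hH : ∀ y, H y = ∫ x in Ioi y, h x)
    (Lh : ℝ → ℝ)
    (hLh : ∀ y, Lh y = 2 * h y + y * deriv h y + 2 * coagOp gρ h y) :
    ∀ y > (0:ℝ),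
      (∫ x in Ioi y, Lh x)
        = -H y - y * h y + ∫ x in (0:ℝ)..y, gρ x * H (y-x) := by
  intro y hy
  have hρ' : ρ ≠ 0 := hρ.ne'
  set b : ℝ := 2/ρ with hbdef
  set c : ℝ := 4/ρ with hcdef
  have hb : 0 < b := by positivity
  have hb' : b ≠ 0 := hb.ne'
  have hg : ∀ x, gρ x = c * Real.exp (-(b*x)) := by
    intro x
    rw [hgρ, hbdef, hcdef]
    congr 2
    ring
  have hcont : Continuous h := hC1.continuous
  have hdiff : Differentiable ℝ h := hC1.differentiable one_ne_zero
  have hd : ∀ x, HasDerivAt h (deriv h x) x := fun x => (hdiff x).hasDerivAt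
  have hcd : Continuous (deriv h) := hC1.continuous_deriv le_rfl
  have hint : Integrable h := hcont.integrable_of_hasCompactSupport hcs
  obtain ⟨R, hR⟩ : ∃ R : ℝ, ∀ t, R ≤ t → h t = 0 := by
    obtain ⟨M, hM⟩ := hcs.isBounded.subset_closedBall 0
    refine ⟨M + 1, fun t ht => ?_⟩
    by_contra hne
    have h1 : t ∈ Metric.closedBall (0:ℝ) M :=
      hM (subset_tsupport h (Function.mem_support.2 hne))
    rw [Metric.mem_closedBall, Real.dist_eq, sub_zero] at h1
    have := le_abs_self t
    linarith [abs_le.1 h1]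
  have hneg : ∀ t : ℝ, t ≤ 0 → h t = 0 := by
    intro t ht
    by_contra hne
    have : t ∈ Ioi (0:ℝ) := hsupp (subset_tsupport h (Function.mem_support.2 hne))
    exact absurd this (by simpa using ht)
  -- φ : primitive of e^{bt} h(t)
  set φ : ℝ → ℝ := fun u => ∫ t in (0:ℝ)..u, Real.exp (b*t) * h t with hφdef
  have hebcont : Continuous fun t => Real.exp (b*t) * h t :=
    (Real.continuous_exp.comp (continuous_const.mul continuous_id)).mul hcont
  have hφd : ∀ u, HasDerivAt φ (Real.exp (b*u) * h u) u := fun u =>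
    (hebcont.integral_hasStrictDerivAt 0 u).hasDerivAt
  have hφcont : Continuous φ := continuous_iff_continuousAt.2 fun u => (hφd u).continuousAt
  have hφR : ∀ u, R ≤ u → φ u = φ R := by
    intro u hu
    have h1 : (∫ t in R..u, Real.exp (b*t) * h t) = 0 := by
      rw [intervalIntegral.integral_congr (g := fun _ => (0:ℝ))
        (fun t ht => by rw [Set.uIcc_of_le hu] at ht; rw [hR t ht.1, mul_zero])]
      simp
    have h2 := intervalIntegral.integral_add_adjacent_intervals
      (a := (0:ℝ)) (b := R) (c := u) (μ := volume)
      (hebcont.intervalIntegrable _ _) (hebcont.intervalIntegrable _ _)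
    rw [h1] at h2
    simp only [hφdef]
    rw [← h2, add_zero]
  -- H facts
  have hH0 : ∀ s, H s = H 0 - ∫ t in (0:ℝ)..s, h t := by
    intro s
    rcases le_or_gt 0 s with hs | hs
    · have hu : Ioc 0 s ∪ Ioi s = Ioi (0:ℝ) := Ioc_union_Ioi_eq_Ioi hs
      rw [hH s, hH 0, ← hu,
        setIntegral_union (Ioc_disjoint_Ioi le_rfl) measurableSet_Ioi
          hint.integrableOn hint.integrableOn,
        intervalIntegral.integral_of_le hs]
      ring
    · have hz : (∫ t in Ioc s (0:ℝ), h t) = 0 := by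
        rw [setIntegral_congr_fun (g := fun _ => (0:ℝ)) measurableSet_Ioc
          (fun t ht => hneg t ht.2)]
        simp
      have hI : (∫ t in (0:ℝ)..s, h t) = 0 := by
        rw [intervalIntegral.integral_symm, intervalIntegral.integral_of_le hs.le, hz, neg_zero]
      have hu : Ioc s 0 ∪ Ioi 0 = Ioi s := Ioc_union_Ioi_eq_Ioi hs.le
      rw [hH s, hH 0, hI, ← hu,
        setIntegral_union (Ioc_disjoint_Ioi le_rfl) measurableSet_Ioi
          hint.integrableOn hint.integrableOn, hz]
      ring
  have hHd : ∀ s, HasDerivAt H (-(h s)) s := by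
    intro s
    have h1 : HasDerivAt (fun u => H 0 - ∫ t in (0:ℝ)..u, h t) (-(h s)) s :=
      ((hcont.integral_hasStrictDerivAt 0 s).hasDerivAt).const_sub (H 0)
    exact h1.congr_of_eventuallyEq (Filter.Eventually.of_forall hH0)
  have hHcont : Continuous H := continuous_iff_continuousAt.2 fun s => (hHd s).continuousAt
  -- tendsto of exp
  have hexp0 : Tendsto (fun x : ℝ => Real.exp (-(b*x))) atTop (nhds 0) := by
    apply Real.tendsto_exp_atBot.comp
    exact tendsto_neg_atTop_atBot.comp (Filter.Tendsto.const_mul_atTop hb tendsto_id)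
  -- antiderivative of c e^{-bx}
  have hgd : ∀ x : ℝ, HasDerivAt (fun x => (-(1/b)*c) * Real.exp (-(b*x)))
      (c * Real.exp (-(b*x))) x := by
    intro x
    have h1 : HasDerivAt (fun x : ℝ => -(b*x)) (-(b*1)) x := ((hasDerivAt_id x).const_mul b).neg
    have h2 := (h1.exp).const_mul (-(1/b)*c)
    refine h2.congr_deriv ?_
    field_simp
  have hgcont : Continuous fun x : ℝ => Real.exp (-(b*x)) :=
    Real.continuous_exp.comp (continuous_const.mul continuous_id).neg
  have hgIntOn : ∀ a : ℝ, IntegrableOn (fun x => c * Real.exp (-(b*x))) (Ioi a) := by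
    intro a
    have := (exp_neg_integrableOn_Ioi a hb).const_mul c
    simpa [neg_mul, IntegrableOn] using this
  have hIg : ∀ a : ℝ, (∫ x in Ioi a, c * Real.exp (-(b*x)))
      = (1/b) * (c * Real.exp (-(b*a))) := by
    intro a
    have hten : Tendsto (fun x => (-(1/b)*c) * Real.exp (-(b*x))) atTop (nhds 0) := by
      have := hexp0.const_mul (-(1/b)*c)
      simpa using this
    have := integral_Ioi_of_hasDerivAt_of_tendsto
      ((continuous_const.mul hgcont).continuousWithinAt)
      (fun x _ => hgd x) (hgIntOn a) hten
    rw [this]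
    simp only [Pi.mul_apply]
    ring
  -- integral of x h'(x)
  have hxh : (∫ x in Ioi y, (h x + x * deriv h x)) = -(y * h y) := by
    have hder : ∀ x ∈ Ioi y, HasDerivAt (fun x => x * h x) (h x + x * deriv h x) x := by
      intro x _
      have := (hasDerivAt_id x).mul (hd x)
      refine this.congr_deriv ?_
      simp only [id_eq]
      ring
    have hcsF : HasCompactSupport fun x : ℝ => x * deriv h x := by
      have := hcs.deriv.mul_left (f := fun x : ℝ => x)
      exact this
    have hintF : IntegrableOn (fun x => h x + x * deriv h x) (Ioi y) :=
      (hint.add ((continuous_id.mul hcd).integrable_of_hasCompactSupport hcsF)).integrableOn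
    have hten : Tendsto (fun x => x * h x) atTop (nhds 0) := by
      apply Tendsto.congr' _ tendsto_const_nhds
      filter_upwards [eventually_ge_atTop R] with x hx
      rw [hR x hx, mul_zero]
    have := integral_Ioi_of_hasDerivAt_of_tendsto
      ((continuous_id.mul hcont).continuousWithinAt) hder hintF hten
    rw [this]
    simp only [Pi.mul_apply, id_eq]
    ring
  -- integrability of g·φ on Ioi y
  have hgφint : IntegrableOn (fun x => c * Real.exp (-(b*x)) * φ x) (Ioi y) := by
    set S := max y R with hS
    have h1 : IntegrableOn (fun x => c * Real.exp (-(b*x)) * φ x) (Ioc y S) :=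
      ((continuous_const.mul hgcont).mul hφcont).integrableOn_Ioc
    have h2 : IntegrableOn (fun x => c * Real.exp (-(b*x)) * φ x) (Ioi S) := by
      have base : IntegrableOn (fun x => (c * φ R) * Real.exp (-(b*x))) (Ioi S) := by
        have := (exp_neg_integrableOn_Ioi S hb).const_mul (c * φ R)
        simpa [neg_mul, IntegrableOn] using this
      apply base.congr_fun _ measurableSet_Ioi
      intro x hx
      show c * φ R * Real.exp (-(b*x)) = c * Real.exp (-(b*x)) * φ x
      rw [hφR x (le_trans (le_max_right y R) (le_of_lt hx))]
      ring
    have := h1.union h2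
    rwa [Ioc_union_Ioi_eq_Ioi (le_max_left y R)] at this
  -- antiderivative for g·φ
  have hgφd : ∀ x : ℝ, HasDerivAt (fun x => (-(1/b)*c) * (Real.exp (-(b*x)) * φ x))
      (c * Real.exp (-(b*x)) * φ x - (c/b) * h x) x := by
    intro x
    have h1 : HasDerivAt (fun x : ℝ => -(b*x)) (-(b*1)) x := ((hasDerivAt_id x).const_mul b).neg
    have h2 := (h1.exp.mul (hφd x)).const_mul (-(1/b)*c)
    refine h2.congr_deriv ?_
    have he : Real.exp (-(b*x)) * Real.exp (b*x) = 1 := by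
      rw [← Real.exp_add]; simp
    field_simp
    linear_combination (-(c * h x)) * he
  have hIgφ : (∫ x in Ioi y, (c * Real.exp (-(b*x)) * φ x - (c/b) * h x))
      = (1/b) * c * Real.exp (-(b*y)) * φ y := by
    have hten : Tendsto (fun x => (-(1/b)*c) * (Real.exp (-(b*x)) * φ x)) atTop (nhds 0) := by
      have h0 : Tendsto (fun x => ((-(1/b)*c) * φ R) * Real.exp (-(b*x))) atTop (nhds 0) := by
        simpa using hexp0.const_mul ((-(1/b)*c) * φ R)
      apply Tendsto.congr' _ h0
      filter_upwards [eventually_ge_atTop R] with x hx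
      rw [hφR x hx]
      ring
    have hintF : IntegrableOn (fun x => c * Real.exp (-(b*x)) * φ x - (c/b) * h x) (Ioi y) :=
      hgφint.sub ((hint.const_mul (c/b)).integrableOn)
    have := integral_Ioi_of_hasDerivAt_of_tendsto
      ((continuous_const.mul (hgcont.mul hφcont)).continuousWithinAt)
      (fun x _ => hgφd x) hintF hten
    rw [this]
    simp only [Pi.mul_apply]
    ring
  -- convolution with h
  have hK : ∀ x : ℝ, (∫ t in (0:ℝ)..x, gρ t * h (x - t)) = gρ x * φ x := by
    intro x
    have h1 : (∫ t in (0:ℝ)..x, gρ t * h (x - t)) = ∫ t in (0:ℝ)..x, gρ (x - t) * h t := by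
      have := intervalIntegral.integral_comp_sub_left (a := (0:ℝ)) (b := x)
        (fun u => gρ (x - u) * h u) x
      simp only [sub_sub_cancel, sub_zero, sub_self] at this
      exact this
    have h2 : EqOn (fun t => gρ (x - t) * h t) (fun t => gρ x * (Real.exp (b*t) * h t))
        (uIcc 0 x) := by
      intro t _
      simp only [hg]
      rw [show (-(b*(x-t))) = -(b*x) + b*t by ring, Real.exp_add]
      ring
    rw [h1, intervalIntegral.integral_congr h2, intervalIntegral.integral_const_mul]
  -- convolution with H
  have hconv : (∫ x in (0:ℝ)..y, gρ x * H (y - x))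
      = gρ y * ∫ t in (0:ℝ)..y, Real.exp (b*t) * H t := by
    have h1 : (∫ x in (0:ℝ)..y, gρ x * H (y - x)) = ∫ t in (0:ℝ)..y, gρ (y - t) * H t := by
      have := intervalIntegral.integral_comp_sub_left (a := (0:ℝ)) (b := y)
        (fun u => gρ (y - u) * H u) y
      simp only [sub_sub_cancel, sub_zero, sub_self] at this
      exact this
    have h2 : EqOn (fun t => gρ (y - t) * H t) (fun t => gρ y * (Real.exp (b*t) * H t))
        (uIcc 0 y) := by
      intro t _
      simp only [hg]
      rw [show (-(b*(y-t))) = -(b*y) + b*t by ring, Real.exp_add]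
      ring
    rw [h1, intervalIntegral.integral_congr h2, intervalIntegral.integral_const_mul]
  -- the ψ identity via FTC
  have hφ0 : φ 0 = 0 := by simp [hφdef]
  have hψ : (∫ t in (0:ℝ)..y, Real.exp (b*t) * H t)
      = (1/b) * (Real.exp (b*y) * H y + φ y) - (1/b) * (Real.exp (b*0) * H 0 + φ 0) := by
    apply intervalIntegral.integral_eq_sub_of_hasDerivAt
    · intro t _
      have h1 : HasDerivAt (fun s : ℝ => Real.exp (b*s)) (Real.exp (b*t) * (b*1)) t :=
        ((hasDerivAt_id t).const_mul b).exp
      have h2 := ((h1.mul (hHd t)).add (hφd t)).const_mul (1/b)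
      refine h2.congr_deriv ?_
      field_simp
      ring
    · exact ((Real.continuous_exp.comp (continuous_const.mul continuous_id)).mul
        hHcont).intervalIntegrable _ _
  -- pointwise decomposition of Lh
  have e1 : ∀ x, Lh x = (h x + x * deriv h x)
      + ((c * Real.exp (-(b*x)) * φ x - (c/b) * h x)
        + ((-(H 0)) * (c * Real.exp (-(b*x))) + h x)) := by
    intro x
    rw [hLh, coagOp, hK x]
    simp only [hg]
    rw [hIg 0, ← hH 0]
    simp only [mul_zero, neg_zero, Real.exp_zero, mul_one]
    field_simp
    ring
  -- splitting the integral
  have hsplit : (∫ x in Ioi y, Lh x)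
      = -(y * h y) + ((1/b) * c * Real.exp (-(b*y)) * φ y
        + ((-(H 0)) * ((1/b) * (c * Real.exp (-(b*y)))) + H y)) := by
    have ip1 : IntegrableOn (fun x => h x + x * deriv h x) (Ioi y) := by
      have hcsF : HasCompactSupport fun x : ℝ => x * deriv h x :=
        hcs.deriv.mul_left (f := fun x : ℝ => x)
      exact (hint.add ((continuous_id.mul hcd).integrable_of_hasCompactSupport hcsF)).integrableOn
    have ip2 : IntegrableOn (fun x => c * Real.exp (-(b*x)) * φ x - (c/b) * h x) (Ioi y) :=
      hgφint.sub ((hint.const_mul (c/b)).integrableOn)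
    have ip3 : IntegrableOn (fun x => (-(H 0)) * (c * Real.exp (-(b*x)))) (Ioi y) := by
      have := (hgIntOn y).const_mul (-(H 0))
      simpa [mul_assoc, IntegrableOn] using this
    have step1 : (∫ x in Ioi y, Lh x)
        = ∫ x in Ioi y, ((h x + x * deriv h x)
          + ((c * Real.exp (-(b*x)) * φ x - (c/b) * h x)
            + ((-(H 0)) * (c * Real.exp (-(b*x))) + h x))) :=
      setIntegral_congr_fun measurableSet_Ioi (fun x _ => e1 x)
    have A1 : (∫ x in Ioi y, ((h x + x * deriv h x)
          + ((c * Real.exp (-(b*x)) * φ x - (c/b) * h x)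
            + ((-(H 0)) * (c * Real.exp (-(b*x))) + h x))))
        = (∫ x in Ioi y, (h x + x * deriv h x))
          + ∫ x in Ioi y, ((c * Real.exp (-(b*x)) * φ x - (c/b) * h x)
            + ((-(H 0)) * (c * Real.exp (-(b*x))) + h x)) :=
      integral_add ip1 (ip2.add (ip3.add hint.integrableOn))
    have A2 : (∫ x in Ioi y, ((c * Real.exp (-(b*x)) * φ x - (c/b) * h x)
            + ((-(H 0)) * (c * Real.exp (-(b*x))) + h x)))
        = (∫ x in Ioi y, (c * Real.exp (-(b*x)) * φ x - (c/b) * h x))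
          + ∫ x in Ioi y, ((-(H 0)) * (c * Real.exp (-(b*x))) + h x) :=
      integral_add ip2 (ip3.add hint.integrableOn)
    have A3 : (∫ x in Ioi y, ((-(H 0)) * (c * Real.exp (-(b*x))) + h x))
        = (∫ x in Ioi y, (-(H 0)) * (c * Real.exp (-(b*x)))) + ∫ x in Ioi y, h x :=
      integral_add ip3 hint.integrableOn
    rw [step1, A1, A2, A3, hxh, hIgφ, ← hH y]
    have h3 : (∫ x in Ioi y, (-(H 0)) * (c * Real.exp (-(b*x))))
        = (-(H 0)) * ((1/b) * (c * Real.exp (-(b*y)))) := by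
      rw [MeasureTheory.integral_const_mul, hIg y]
    rw [h3]
  -- final assembly
  rw [hsplit, hconv, hψ, hφ0, hg y, mul_zero, Real.exp_zero]
  have he : Real.exp (-(b*y)) * Real.exp (b*y) = 1 := by
    rw [← Real.exp_add]; simp
  have hcb : c = 2 * b := by rw [hcdef, hbdef]; ring
  rw [hcb]
  field_simp
  have he' : Real.exp (-(y*b)) * Real.exp (y*b) = 1 := by rw [mul_comm y b]; exact he
  linear_combination (-(2 * H y)) * he'
end

section
/- Fix ρ > 0, set μ = 2/ρ and g_ρ(y) = (4/ρ)e^{−μy}. Let h be C¹ with compact support in (0,∞) (or more generally smooth enough with ∫₀^∞ H(y)² e^{μy} dy < ∞) satisfying ∫₀^∞ y h(y) dy = 0, and let H(y) = ∫_y^∞ h, 𝓛h(y) = −H(y) − y h(y) + (g_ρ*H)(y). Then ∫₀^∞ H(y) 𝓛h(y) e^{μy} dy ≤ − ∫₀^∞ H(y)² e^{μy} dy. -/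
open MeasureTheory Real Set

theorem spectral_gap_inequality (ρ : ℝ) (hρ : 0 < ρ) (μ : ℝ) (hμ : μ = 2/ρ)
    (gρ : ℝ → ℝ) (hgρ : ∀ y, gρ y = (4/ρ) * Real.exp (-μ*y))
    (h : ℝ → ℝ) (hC1 : ContDiff ℝ 1 h) (hcs : HasCompactSupport h)
    (hsupp : tsupport h ⊆ Ioi 0)
    (H : ℝ → ℝ) (hH : ∀ y, H y = ∫ x in Ioi y, h x)
    (hHint : IntegrableOn (fun y => (H y)^2 * Real.exp (μ*y)) (Ioi 0))
    (hmass : (∫ y in Ioi (0:ℝ), y * h y) = 0)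
    (Lh : ℝ → ℝ)
    (hLh : ∀ y, Lh y = -H y - y * h y + ∫ x in (0:ℝ)..y, gρ x * H (y-x)) :
    (∫ y in Ioi (0:ℝ), H y * Lh y * Real.exp (μ*y))
      ≤ - ∫ y in Ioi (0:ℝ), (H y)^2 * Real.exp (μ*y) := by
  have hμpos : 0 < μ := by rw [hμ]; positivity
  have hcont : Continuous h := hC1.continuous
  have hInt : Integrable h := hcont.integrable_of_hasCompactSupport hcs
  -- upper bound of the support
  obtain ⟨R, hR⟩ := hcs.isCompact.bddAbove
  set B : ℝ := max R 0 + 1 with hBdef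
  have hB0 : (0:ℝ) < B := by
    have : (0:ℝ) ≤ max R 0 := le_max_right R 0
    linarith
  have hhB : ∀ y, B ≤ y → h y = 0 := by
    intro y hy
    apply image_eq_zero_of_notMem_tsupport
    intro hmem
    have h1 : y ≤ R := hR hmem
    have h2 : R ≤ max R 0 := le_max_left R 0
    linarith
  have hint0 : ∀ a b : ℝ, IntervalIntegrable h volume a b :=
    fun a b => hInt.intervalIntegrable
  have hIoizero : ∀ (f : ℝ → ℝ) (c : ℝ), (∀ x, c ≤ x → f x = 0) →
      (∫ x in Ioi c, f x) = 0 := by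
    intro f c hf
    exact setIntegral_eq_zero_of_forall_eq_zero fun x hx => hf x (le_of_lt hx)
  -- interval representation of H
  have hHeq : ∀ y, H y = ∫ t in y..B, h t := by
    intro y
    rcases le_or_gt y B with hy | hy
    · rw [hH y, ← Ioc_union_Ioi_eq_Ioi hy,
        setIntegral_union (Ioc_disjoint_Ioi le_rfl) measurableSet_Ioi
          hInt.integrableOn hInt.integrableOn,
        hIoizero h B hhB, add_zero, intervalIntegral.integral_of_le hy]
    · rw [hH y, hIoizero h y (fun x hx => hhB x (hy.le.trans hx)),
        intervalIntegral.integral_symm, intervalIntegral.integral_of_le hy.le,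
        setIntegral_eq_zero_of_forall_eq_zero (fun x hx => hhB x hx.1.le), neg_zero]
  have hHd : ∀ y, HasDerivAt H (-h y) y := by
    intro y
    have h2 : ∀ z, H z = (∫ t in (0:ℝ)..B, h t) - ∫ t in (0:ℝ)..z, h t := by
      intro z
      rw [hHeq z, eq_sub_iff_add_eq, add_comm]
      exact intervalIntegral.integral_add_adjacent_intervals (hint0 0 z) (hint0 z B)
    rw [show H = fun z => (∫ t in (0:ℝ)..B, h t) - ∫ t in (0:ℝ)..z, h t from funext h2]
    exact HasDerivAt.const_sub _
      (intervalIntegral.integral_hasDerivAt_right (hint0 0 y)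
        (hcont.stronglyMeasurableAtFilter _ _) hcont.continuousAt)
  have hHcont : Continuous H :=
    continuous_iff_continuousAt.mpr fun y => (hHd y).continuousAt
  have hHB : ∀ y, B ≤ y → H y = 0 := by
    intro y hy
    rw [hHeq y]
    rw [intervalIntegral.integral_congr (g := fun _ => (0:ℝ))
      (fun x hx => by
        rw [uIcc_of_ge hy] at hx
        exact hhB x hx.1)]
    simp
  -- the second primitive K and the weighted primitive P
  set K : ℝ → ℝ := fun y => ∫ t in y..B, H t with hKdef
  have hHic : ∀ a b : ℝ, IntervalIntegrable H volume a b :=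
    fun a b => hHcont.intervalIntegrable a b
  have hKd : ∀ y, HasDerivAt K (-H y) y := by
    intro y
    have h2 : ∀ z, K z = (∫ t in (0:ℝ)..B, H t) - ∫ t in (0:ℝ)..z, H t := by
      intro z
      rw [hKdef, eq_sub_iff_add_eq, add_comm]
      exact intervalIntegral.integral_add_adjacent_intervals (hHic 0 z) (hHic z B)
    rw [show K = fun z => (∫ t in (0:ℝ)..B, H t) - ∫ t in (0:ℝ)..z, H t from funext h2]
    exact HasDerivAt.const_sub _
      (intervalIntegral.integral_hasDerivAt_right (hHic 0 y)
        (hHcont.stronglyMeasurableAtFilter _ _) hHcont.continuousAt)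
  have hKcont : Continuous K :=
    continuous_iff_continuousAt.mpr fun y => (hKd y).continuousAt
  have hKB : ∀ y, B ≤ y → K y = 0 := by
    intro y hy
    rw [hKdef]
    show (∫ t in y..B, H t) = 0
    rw [intervalIntegral.integral_congr (g := fun _ => (0:ℝ))
      (fun x hx => by
        rw [uIcc_of_ge hy] at hx
        exact hHB x hx.1)]
    simp
  have hecont : Continuous fun t : ℝ => Real.exp (μ*t) := by fun_prop
  set P : ℝ → ℝ := fun y => ∫ t in (0:ℝ)..y, Real.exp (μ*t) * H t with hPdef
  have hPic : ∀ a b : ℝ, IntervalIntegrable (fun t => Real.exp (μ*t) * H t) volume a b :=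
    fun a b => (hecont.mul hHcont).intervalIntegrable a b
  have hPd : ∀ y, HasDerivAt P (Real.exp (μ*y) * H y) y := by
    intro y
    exact intervalIntegral.integral_hasDerivAt_right (hPic 0 y)
      ((hecont.mul hHcont).stronglyMeasurableAtFilter _ _)
      (hecont.mul hHcont).continuousAt
  have hPcont : Continuous P :=
    continuous_iff_continuousAt.mpr fun y => (hPd y).continuousAt
  -- K 0 = 0 (zero mass)
  have hyhc : Continuous fun t : ℝ => t * h t := continuous_id.mul hcont
  have hIoiB : ∀ (f : ℝ → ℝ), Continuous f → (∀ y, B ≤ y → f y = 0) →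
      (∫ y in Ioi (0:ℝ), f y) = ∫ y in (0:ℝ)..B, f y := by
    intro f hf h0
    have h1 : IntegrableOn f (Ioi B) := by
      exact (integrableOn_congr_fun (g := fun _ => (0:ℝ))
        (fun x hx => h0 x (le_of_lt hx)) measurableSet_Ioi).mpr integrableOn_zero
    rw [← Ioc_union_Ioi_eq_Ioi hB0.le,
      setIntegral_union (Ioc_disjoint_Ioi le_rfl) measurableSet_Ioi
        hf.integrableOn_Ioc h1,
      hIoizero f B h0, add_zero, intervalIntegral.integral_of_le hB0.le]
  have hK0 : K 0 = 0 := by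
    have hid : ∀ t : ℝ, HasDerivAt (fun s => s * H s) (H t - t * h t) t := by
      intro t
      have h1 := (hasDerivAt_id t).mul (hHd t)
      refine h1.congr_deriv ?_
      simp only [id_eq]
      ring
    have hftc : (∫ t in (0:ℝ)..B, (H t - t * h t)) = B * H B - 0 * H 0 :=
      intervalIntegral.integral_eq_sub_of_hasDerivAt (fun t _ => hid t)
        ((hHcont.sub hyhc).intervalIntegrable _ _)
    have hsplit : (∫ t in (0:ℝ)..B, (H t - t * h t))
        = (∫ t in (0:ℝ)..B, H t) - ∫ t in (0:ℝ)..B, t * h t :=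
      intervalIntegral.integral_sub (hHic 0 B) (hyhc.intervalIntegrable 0 B)
    have hmass' : (∫ t in (0:ℝ)..B, t * h t) = 0 := by
      rw [← hIoiB (fun t => t * h t) hyhc (fun y hy => by show y * h y = 0; rw [hhB y hy, mul_zero])]
      exact hmass
    rw [hHB B le_rfl, hsplit, hmass'] at hftc
    show (∫ t in (0:ℝ)..B, H t) = 0
    linarith [hftc]
  -- the convolution identity
  have hconv : ∀ y : ℝ, (∫ x in (0:ℝ)..y, gρ x * H (y-x))
      = 2*μ*Real.exp (-(μ*y)) * P y := by
    intro y
    have h4 : (4:ℝ)/ρ = 2*μ := by rw [hμ]; ring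
    have hg : ∀ x, gρ x * H (y - x)
        = (fun u => 2*μ*Real.exp (-(μ*y)) * (Real.exp (μ*u) * H u)) (y - x) := by
      intro x
      rw [hgρ x, h4,
        show Real.exp (-μ*x) = Real.exp (-(μ*y)) * Real.exp (μ*(y-x)) by
          rw [← Real.exp_add]; congr 1; ring]
      ring
    calc (∫ x in (0:ℝ)..y, gρ x * H (y-x))
        = ∫ x in (0:ℝ)..y,
            (fun u => 2*μ*Real.exp (-(μ*y)) * (Real.exp (μ*u) * H u)) (y - x) := by
          simp only [hg]
      _ = ∫ u in (y - y)..(y - 0), 2*μ*Real.exp (-(μ*y)) * (Real.exp (μ*u) * H u) :=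
          intervalIntegral.integral_comp_sub_left
            (fun u => 2*μ*Real.exp (-(μ*y)) * (Real.exp (μ*u) * H u)) y
      _ = 2*μ*Real.exp (-(μ*y)) * P y := by
          rw [sub_self, sub_zero, intervalIntegral.integral_const_mul]
  have hLh2 : ∀ y, Lh y = -H y - y * h y + 2*μ*Real.exp (-(μ*y)) * P y := by
    intro y
    rw [hLh y, hconv y]
  have hLhcont : Continuous Lh := by
    rw [show Lh = fun y => -H y - y * h y + 2*μ*Real.exp (-(μ*y)) * P y from funext hLh2]
    fun_prop
  -- the auxiliary function N and slope limits
  set N : ℝ → ℝ := fun y => y * H y + (1 - μ*y) * K y with hNdef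
  have hNcont : Continuous N := by rw [hNdef]; fun_prop
  have hN0 : N 0 = 0 := by simp [hNdef, hK0]
  have hNd : ∀ t : ℝ, HasDerivAt N
      ((1 * H t + t * -h t) + (-(μ*1) * K t + (1 - μ*t) * -H t)) t := by
    intro t
    rw [hNdef]
    exact ((hasDerivAt_id t).mul (hHd t)).add
      ((((hasDerivAt_id t).const_mul μ).const_sub 1).mul (hKd t))
  have hNd0 : HasDerivAt N 0 0 := by
    have h1 := hNd 0
    have h2 : (1 * H 0 + 0 * -h 0) + (-(μ*1) * K 0 + (1 - μ*0) * -H 0) = 0 := by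
      rw [hK0]; ring
    rwa [h2] at h1
  have hslopeK : Filter.Tendsto (fun t => K t / t)
      (nhdsWithin 0 {(0:ℝ)}ᶜ) (nhds (-H 0)) := by
    have h1 := hasDerivAt_iff_tendsto_slope.mp (hKd 0)
    have h2 : slope K 0 = fun t => K t / t := by
      funext t
      rw [slope_def_field, hK0, sub_zero, sub_zero]
    rwa [h2] at h1
  have hslopeN : Filter.Tendsto (fun t => N t / t)
      (nhdsWithin 0 {(0:ℝ)}ᶜ) (nhds 0) := by
    have h1 := hasDerivAt_iff_tendsto_slope.mp hNd0
    have h2 : slope N 0 = fun t => N t / t := by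
      funext t
      rw [slope_def_field, hN0, sub_zero, sub_zero]
    rwa [h2] at h1
  -- continuity over [0, B] of the singular pieces
  have hNdivcont : ContinuousOn (fun t => N t / t) (Icc 0 B) := by
    intro x hx
    rcases eq_or_ne x 0 with rfl | hx0
    · rw [← continuousWithinAt_diff_self]
      show Filter.Tendsto (fun t => N t / t) (nhdsWithin 0 (Icc 0 B \ {0})) (nhds (N 0 / 0))
      rw [div_zero]
      exact hslopeN.mono_left (nhdsWithin_mono 0 (fun t ht => ht.2))
    · exact (hNcont.continuousAt.div continuousAt_id hx0).continuousWithinAt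
  have hKsqcont : ContinuousOn (fun t => (K t)^2 / t) (Icc 0 B) := by
    intro x hx
    rcases eq_or_ne x 0 with rfl | hx0
    · rw [← continuousWithinAt_diff_self]
      show Filter.Tendsto (fun t => (K t)^2 / t) (nhdsWithin 0 (Icc 0 B \ {0})) (nhds ((K 0)^2 / 0))
      rw [div_zero]
      have h1 : Filter.Tendsto (fun t => K t * (K t / t))
          (nhdsWithin 0 (Icc 0 B \ {0})) (nhds (0 * -H 0)) := by
        apply Filter.Tendsto.mul
        · have h2 : Filter.Tendsto K (nhdsWithin 0 (Icc 0 B \ {0})) (nhds (K 0)) :=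
            (hKcont.tendsto 0).mono_left nhdsWithin_le_nhds
          rwa [hK0] at h2
        · exact hslopeK.mono_left (nhdsWithin_mono 0 (fun t ht => ht.2))
      rw [zero_mul] at h1
      apply h1.congr
      intro t
      rw [pow_two, mul_div_assoc]
    · exact ((hKcont.continuousAt.pow 2).div continuousAt_id hx0).continuousWithinAt
  -- the potential function Φ and its derivative
  set Φ : ℝ → ℝ := fun y => 1/2*y*(H y)^2*Real.exp (μ*y) - 2*μ*(K y)*(P y)
      - 1/2*Real.exp (μ*y)*((K y)^2/y + (2*μ - μ^2*y)*(K y)^2) with hΦdef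
  have hΦcont : ContinuousOn Φ (Icc 0 B) := by
    rw [hΦdef]
    apply ContinuousOn.sub
    · exact Continuous.continuousOn (by fun_prop)
    · apply ContinuousOn.mul
      · exact (continuous_const.mul hecont).continuousOn
      · exact hKsqcont.add (Continuous.continuousOn (by fun_prop))
  have hΦd : ∀ y : ℝ, y ≠ 0 → HasDerivAt Φ
      (H y * Lh y * Real.exp (μ*y) + (H y)^2*Real.exp (μ*y)
        + 1/2*(1+μ*y)*Real.exp (μ*y)*(N y / y)^2) y := by
    intro y hy0
    have hexp : HasDerivAt (fun s : ℝ => Real.exp (μ*s)) (Real.exp (μ*y) * (μ*1)) y :=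
      ((hasDerivAt_id y).const_mul μ).exp
    have hA := (((hasDerivAt_id y).const_mul (1/2:ℝ)).mul ((hHd y).pow 2)).mul hexp
    have hB := ((hKd y).const_mul (2*μ)).mul (hPd y)
    have hC1 := ((hKd y).pow 2).div (hasDerivAt_id y) hy0
    have hC2 := (((hasDerivAt_id y).const_mul (μ^2)).const_sub (2*μ)).mul ((hKd y).pow 2)
    have hC := (hexp.const_mul (1/2:ℝ)).mul (hC1.add hC2)
    have hbig := (hA.sub hB).sub hC
    rw [hΦdef]
    refine hbig.congr_deriv ?_
    rw [hLh2 y]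
    simp only [hNdef, id_eq, Real.exp_neg, Pi.mul_apply, Pi.pow_apply, Pi.div_apply, Pi.add_apply]
    have hE := Real.exp_ne_zero (μ*y)
    field_simp
    ring
  have hΦB : Φ B = 0 := by
    simp only [hΦdef]
    rw [hHB B le_rfl, hKB B le_rfl]
    norm_num
  have hΦ0 : Φ 0 = 0 := by
    simp only [hΦdef]
    rw [hK0]
    norm_num
  -- the square term
  set Sq : ℝ → ℝ := fun y => 1/2*(1+μ*y)*Real.exp (μ*y)*(N y / y)^2 with hSqdef
  have hSqcont : ContinuousOn Sq (Icc 0 B) := by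
    rw [hSqdef]
    exact (Continuous.continuousOn (by fun_prop)).mul (hNdivcont.pow 2)
  have hSqII : IntervalIntegrable Sq volume 0 B := by
    apply ContinuousOn.intervalIntegrable
    rwa [uIcc_of_le hB0.le]
  have hTcont : Continuous fun y => H y * Lh y * Real.exp (μ*y) := by fun_prop
  have hT2cont : Continuous fun y => (H y)^2 * Real.exp (μ*y) := by fun_prop
  -- fundamental theorem of calculus
  have hftc2 : (∫ y in (0:ℝ)..B,
        (H y * Lh y * Real.exp (μ*y) + (H y)^2*Real.exp (μ*y) + Sq y)) = Φ B - Φ 0 := by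
    apply intervalIntegral.integral_eq_sub_of_hasDeriv_right_of_le hB0.le hΦcont
    · intro x hx
      have hd := hΦd x (ne_of_gt hx.1)
      simpa only [hSqdef] using hd.hasDerivWithinAt
    · exact ((hTcont.intervalIntegrable 0 B).add (hT2cont.intervalIntegrable 0 B)).add hSqII
  rw [hΦB, hΦ0, sub_zero] at hftc2
  have hsplit2 : (∫ y in (0:ℝ)..B,
        (H y * Lh y * Real.exp (μ*y) + (H y)^2*Real.exp (μ*y) + Sq y))
      = ((∫ y in (0:ℝ)..B, H y * Lh y * Real.exp (μ*y))
        + (∫ y in (0:ℝ)..B, (H y)^2*Real.exp (μ*y))) + ∫ y in (0:ℝ)..B, Sq y := by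
    rw [intervalIntegral.integral_add
        ((hTcont.intervalIntegrable 0 B).add (hT2cont.intervalIntegrable 0 B)) hSqII,
      intervalIntegral.integral_add (hTcont.intervalIntegrable 0 B)
        (hT2cont.intervalIntegrable 0 B)]
  have hSqnn : 0 ≤ ∫ y in (0:ℝ)..B, Sq y := by
    apply intervalIntegral.integral_nonneg hB0.le
    intro u hu
    simp only [hSqdef]
    have h1 : 0 ≤ 1 + μ*u := by nlinarith [hu.1, hμpos.le]
    have h2 : (0:ℝ) ≤ 1/2 := by norm_num
    exact mul_nonneg (mul_nonneg (mul_nonneg h2 h1) (Real.exp_pos _).le) (sq_nonneg _)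
  have hTIoi : (∫ y in Ioi (0:ℝ), H y * Lh y * Real.exp (μ*y))
      = ∫ y in (0:ℝ)..B, H y * Lh y * Real.exp (μ*y) :=
    hIoiB _ hTcont (fun y hy => by
      show H y * Lh y * Real.exp (μ*y) = 0
      rw [hHB y hy]; ring)
  have hT2Ioi : (∫ y in Ioi (0:ℝ), (H y)^2 * Real.exp (μ*y))
      = ∫ y in (0:ℝ)..B, (H y)^2 * Real.exp (μ*y) :=
    hIoiB _ hT2cont (fun y hy => by
      show (H y)^2 * Real.exp (μ*y) = 0
      rw [hHB y hy]; ring)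
  rw [hTIoi, hT2Ioi]
  linarith [hsplit2, hftc2, hSqnn]
end

section
/- Fix ρ > 0, g_ρ(y) = (4/ρ)e^{−2y/ρ}, and let 0 < μ < 4/ρ. For h ∈ L¹(0,∞) with H(y) = ∫_y^∞ h and ∫₀^∞ H(y)² e^{μy} dy < ∞, define C(g_ρ,h) via its tail primitive 2∫_y^∞ C(g_ρ,h) = (g_ρ*H)(y) − 2H(y). Then ‖C(g_ρ,h)‖_{−1,μ} ≤ (∫₀^∞ g_ρ(y) e^{μy/2} dy) · ‖h‖_{−1,μ}, where ‖h‖²_{−1,μ} = ∫₀^∞ H(y)² e^{μy} dy. -/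
open MeasureTheory Real Set

open scoped ENNReal in
private lemma rp2 (x : ℝ≥0∞) : x ^ (2:ℝ) = x ^ (2:ℕ) := by
  rw [← ENNReal.rpow_natCast x 2]; norm_num

theorem linear_coag_bounded_minus_one (ρ : ℝ) (hρ : 0 < ρ) (μ : ℝ)
    (hμ : 0 < μ) (hμ' : μ < 4/ρ)
    (gρ : ℝ → ℝ) (hgρ : ∀ y, gρ y = (4/ρ) * Real.exp (-2*y/ρ))
    (h : ℝ → ℝ) (hh : IntegrableOn h (Ioi 0))
    (H : ℝ → ℝ) (hH : ∀ y, H y = ∫ x in Ioi y, h x)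
    (hHint : IntegrableOn (fun y => (H y)^2 * Real.exp (μ*y)) (Ioi 0))
    (CP : ℝ → ℝ)
    (hCP : ∀ y, CP y = ((∫ x in (0:ℝ)..y, gρ x * H (y-x)) - 2 * H y) / 2) :
    Real.sqrt (∫ y in Ioi (0:ℝ), (CP y)^2 * Real.exp (μ*y))
      ≤ (∫ y in Ioi (0:ℝ), gρ y * Real.exp (μ*y/2))
          * Real.sqrt (∫ y in Ioi (0:ℝ), (H y)^2 * Real.exp (μ*y)) := by
  have hgρ' : gρ = fun y => (4/ρ) * Real.exp (-2*y/ρ) := funext hgρ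
  subst hgρ'
  -- continuous representative of H on [0,∞)
  set h0 : ℝ → ℝ := (Ioi 0).indicator h with hh0def
  have hh0int : Integrable h0 := (integrable_indicator_iff measurableSet_Ioi).2 hh
  set c₀ : ℝ := ∫ x in Ioi 0, h x with hc0def
  set Q : ℝ → ℝ := fun y => ∫ t in (0:ℝ)..y, h0 t with hQdef
  have hQcont : Continuous Q := hh0int.continuous_primitive 0
  set HC : ℝ → ℝ := fun y => c₀ - Q y with hHCdef
  have hHCcont : Continuous HC := continuous_const.sub hQcont
  have Hid : ∀ y : ℝ, 0 ≤ y → H y = HC y := by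
    intro y hy
    have hIoc : IntegrableOn h (Ioc 0 y) := hh.mono_set Ioc_subset_Ioi_self
    have hIoi : IntegrableOn h (Ioi y) := hh.mono_set (Ioi_subset_Ioi hy)
    have hdisj : Disjoint (Ioc (0:ℝ) y) (Ioi y) := Ioc_disjoint_Ioi le_rfl
    have hsum := MeasureTheory.setIntegral_union hdisj measurableSet_Ioi hIoc hIoi
    rw [Ioc_union_Ioi_eq_Ioi hy] at hsum
    have hQy : Q y = ∫ t in Ioc 0 y, h t := by
      show (∫ t in (0:ℝ)..y, h0 t) = _
      rw [intervalIntegral.integral_of_le hy, hh0def]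
      rw [setIntegral_indicator measurableSet_Ioi]
      congr 1
      rw [inter_eq_left.2 Ioc_subset_Ioi_self]
    rw [hH y, hHCdef]
    simp only [hQy]
    rw [hc0def]
    linarith [hsum]
  -- the constant A
  set A : ℝ := ∫ y in Ioi (0:ℝ), (4/ρ * Real.exp (-2*y/ρ)) * Real.exp (μ*y/2) with hAdef
  have hb : 0 < 2/ρ - μ/2 := by
    have h4 : μ < 4/ρ := hμ'
    have h2 : 2/ρ = (4/ρ)/2 := by ring
    linarith
  have hKeq : ∀ x : ℝ, (4/ρ * Real.exp (-2*x/ρ)) * Real.exp (μ*x/2)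
      = (4/ρ) * Real.exp (-(2/ρ - μ/2)*x) := by
    intro x
    rw [mul_assoc, ← Real.exp_add]
    ring_nf
  have iK : IntegrableOn (fun x => (4/ρ * Real.exp (-2*x/ρ)) * Real.exp (μ*x/2)) (Ioi 0) := by
    simp only [hKeq]
    exact (exp_neg_integrableOn_Ioi 0 hb).const_mul _
  have iG : IntegrableOn (fun x => 4/ρ * Real.exp (-2*x/ρ)) (Ioi 0) := by
    have : ∀ x : ℝ, 4/ρ * Real.exp (-2*x/ρ) = 4/ρ * Real.exp (-(2/ρ)*x) := by
      intro x; congr 1; congr 1; ring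
    simp only [this]
    exact (exp_neg_integrableOn_Ioi 0 (by positivity)).const_mul _
  have hGval : (∫ y in Ioi (0:ℝ), 4/ρ * Real.exp (-2*y/ρ)) = 2 := by
    have h1 : ∀ y : ℝ, 4/ρ * Real.exp (-2*y/ρ) = 4/ρ * ((fun t => Real.exp (-t)) ((2/ρ)*y)) := by
      intro y; congr 1; show _ = Real.exp (-(2/ρ*y)); congr 1; ring
    simp only [h1]
    rw [MeasureTheory.integral_const_mul]
    rw [integral_comp_mul_left_Ioi (fun t => Real.exp (-t)) 0 (by positivity : (0:ℝ) < 2/ρ)]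
    simp only [mul_zero, integral_exp_neg_Ioi_zero, smul_eq_mul]
    field_simp
    norm_num
  have hA2 : (2:ℝ) ≤ A := by
    rw [← hGval, hAdef]
    apply setIntegral_mono_on iG iK measurableSet_Ioi
    intro x hx
    have h1 : (1:ℝ) ≤ Real.exp (μ*x/2) := by
      apply Real.one_le_exp
      have : (0:ℝ) < x := hx
      positivity
    have h2 : (0:ℝ) ≤ 4/ρ * Real.exp (-2*x/ρ) := by positivity
    calc 4/ρ * Real.exp (-2*x/ρ) = (4/ρ * Real.exp (-2*x/ρ)) * 1 := (mul_one _).symm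
      _ ≤ _ := mul_le_mul_of_nonneg_left h1 h2
  have hA0 : (0:ℝ) ≤ A := by linarith
  -- ENNReal versions
  set Ke : ℝ → ENNReal := fun x => ENNReal.ofReal ((4/ρ * Real.exp (-2*x/ρ)) * Real.exp (μ*x/2)) with hKedef
  have hKemeas : Measurable Ke := by
    apply Measurable.ennreal_ofReal
    fun_prop
  set FC : ℝ → ℝ := fun u => |HC u| * Real.exp (μ*u/2) with hFCdef
  have hFCcont : Continuous FC := (hHCcont.abs).mul (by fun_prop)
  have hFC0 : ∀ u, 0 ≤ FC u := fun u => by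
    simp only [hFCdef]; positivity
  set Fe : ℝ → ENNReal := fun u => ENNReal.ofReal (FC u) with hFedef
  have hFemeas : Measurable Fe := hFCcont.measurable.ennreal_ofReal
  set Fe0 : ℝ → ENNReal := (Ioi 0).indicator Fe with hFe0def
  have hFe0meas : Measurable Fe0 := hFemeas.indicator measurableSet_Ioi
  have hFe0pos : ∀ u : ℝ, 0 < u → Fe0 u = Fe u := fun u hu => by
    simp only [hFe0def, indicator_of_mem (mem_Ioi.2 hu)]
  set Te : ℝ → ENNReal := fun y => ∫⁻ x in Ioi 0, Ke x * Fe0 (y - x) with hTedef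
  have hTemeas : Measurable Te := by
    apply Measurable.lintegral_prod_right (f := fun y x => Ke x * Fe0 (y - x))
    exact (hKemeas.comp measurable_snd).mul (hFe0meas.comp (measurable_fst.sub measurable_snd))
  set Ae : ENNReal := ∫⁻ x in Ioi 0, Ke x with hAedef
  have hAe : ENNReal.ofReal A = Ae := by
    rw [hAdef, hAedef, hKedef]
    exact ofReal_integral_eq_lintegral_ofReal iK
      (Filter.Eventually.of_forall fun x => by positivity)
  have hAetop : Ae ≠ ⊤ := by rw [← hAe]; exact ENNReal.ofReal_ne_top
  have hAe2 : (2:ENNReal) ≤ Ae := by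
    rw [← hAe, show ((2:ENNReal) = ENNReal.ofReal 2) by simp]
    exact ENNReal.ofReal_le_ofReal hA2
  set B2 : ℝ := ∫ y in Ioi (0:ℝ), (H y)^2 * Real.exp (μ*y) with hB2def
  have hB20 : 0 ≤ B2 := by
    rw [hB2def]
    apply integral_nonneg
    intro y; positivity
  set Be2 : ENNReal := ∫⁻ u in Ioi 0, (Fe u)^(2:ℝ) with hBe2def
  have hBe2 : ENNReal.ofReal B2 = Be2 := by
    rw [hB2def, hBe2def]
    rw [ofReal_integral_eq_lintegral_ofReal hHint
      (Filter.Eventually.of_forall fun y => by positivity)]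
    apply setLIntegral_congr_fun measurableSet_Ioi
    intro u hu
    beta_reduce
    rw [hFedef]
    rw [rp2, ← ENNReal.ofReal_pow (hFC0 u)]
    congr 1
    rw [hFCdef]
    simp only
    rw [mul_pow, sq_abs, ← Hid u (le_of_lt hu)]
    congr 1
    rw [sq, ← Real.exp_add]
    congr 1; ring
  have hBe2top : Be2 ≠ ⊤ := by rw [← hBe2]; exact ENNReal.ofReal_ne_top
  -- Cauchy-Schwarz pointwise in y
  have hconj : Real.HolderConjugate 2 2 := Real.HolderConjugate.two_two
  have hCS : ∀ y : ℝ, Te y ^ (2:ℝ)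
      ≤ Ae * ∫⁻ x in Ioi 0, Ke x * (Fe0 (y - x)) ^ (2:ℝ) := by
    intro y
    have hf : AEMeasurable (fun x => Ke x ^ (2⁻¹:ℝ)) (volume.restrict (Ioi 0)) :=
      (hKemeas.pow_const _).aemeasurable
    have hg : AEMeasurable (fun x => Ke x ^ (2⁻¹:ℝ) * Fe0 (y - x)) (volume.restrict (Ioi 0)) :=
      ((hKemeas.pow_const _).mul (hFe0meas.comp (measurable_const.sub measurable_id))).aemeasurable
    have key := ENNReal.lintegral_mul_le_Lp_mul_Lq (volume.restrict (Ioi 0)) hconj hf hg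
    have hTle : Te y ≤ (∫⁻ x in Ioi 0, Ke x ∂volume) ^ (2⁻¹:ℝ)
        * (∫⁻ x in Ioi 0, Ke x * Fe0 (y - x) ^ (2:ℝ)) ^ (2⁻¹:ℝ) := by
      rw [hTedef]
      simp only
      calc (∫⁻ x in Ioi 0, Ke x * Fe0 (y - x))
          = ∫⁻ x in Ioi 0, (fun x => Ke x ^ (2⁻¹:ℝ)) x * (fun x => Ke x ^ (2⁻¹:ℝ) * Fe0 (y - x)) x := by
            apply lintegral_congr
            intro x
            simp only
            rw [← mul_assoc, ← ENNReal.rpow_add_of_nonneg _ _ (by norm_num) (by norm_num)]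
            norm_num
        _ ≤ _ := by
            refine le_trans (le_of_eq ?_) (le_trans key (le_of_eq ?_))
            · rfl
            · congr 1
              · congr 1
                · apply lintegral_congr
                  intro x
                  rw [← ENNReal.rpow_mul]
                  norm_num
                · norm_num
              · congr 1
                · apply lintegral_congr
                  intro x
                  rw [ENNReal.mul_rpow_of_nonneg _ _ (by norm_num : (0:ℝ) ≤ 2), ← ENNReal.rpow_mul]
                  norm_num
                · norm_num
    calc Te y ^ (2:ℝ) ≤ ((∫⁻ x in Ioi 0, Ke x) ^ (2⁻¹:ℝ)
          * (∫⁻ x in Ioi 0, Ke x * Fe0 (y - x) ^ (2:ℝ)) ^ (2⁻¹:ℝ)) ^ (2:ℝ) :=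
        ENNReal.rpow_le_rpow hTle (by norm_num)
      _ = Ae * ∫⁻ x in Ioi 0, Ke x * (Fe0 (y - x)) ^ (2:ℝ) := by
          rw [ENNReal.mul_rpow_of_nonneg _ _ (by norm_num : (0:ℝ) ≤ 2),
            ← ENNReal.rpow_mul, ← ENNReal.rpow_mul, hAedef]
          norm_num
  -- Young / Tonelli step
  have hshift : ∀ x : ℝ, (∫⁻ y in Ioi 0, Fe0 (y - x) ^ (2:ℝ)) ≤ Be2 := by
    intro x
    calc (∫⁻ y in Ioi 0, Fe0 (y - x) ^ (2:ℝ))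
        ≤ ∫⁻ y, Fe0 (y - x) ^ (2:ℝ) := setLIntegral_le_lintegral _ _
      _ = ∫⁻ u, Fe0 u ^ (2:ℝ) := lintegral_sub_right_eq_self (fun u => Fe0 u ^ (2:ℝ)) x
      _ = ∫⁻ u in Ioi 0, Fe u ^ (2:ℝ) := by
          rw [← lintegral_indicator measurableSet_Ioi]
          apply lintegral_congr
          intro u
          rw [hFe0def]
          by_cases hu : u ∈ Ioi (0:ℝ)
          · rw [indicator_of_mem hu, indicator_of_mem hu]
          · rw [indicator_of_notMem hu, indicator_of_notMem hu,
              ENNReal.zero_rpow_of_pos (by norm_num)]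
      _ = Be2 := by rw [hBe2def]
  have hYoung : (∫⁻ y in Ioi 0, Te y ^ (2:ℝ)) ≤ Ae ^ (2:ℝ) * Be2 := by
    calc (∫⁻ y in Ioi 0, Te y ^ (2:ℝ))
        ≤ ∫⁻ y in Ioi 0, Ae * ∫⁻ x in Ioi 0, Ke x * (Fe0 (y - x)) ^ (2:ℝ) :=
          lintegral_mono hCS
      _ = Ae * ∫⁻ y in Ioi 0, ∫⁻ x in Ioi 0, Ke x * (Fe0 (y - x)) ^ (2:ℝ) :=
          lintegral_const_mul' _ _ hAetop
      _ = Ae * ∫⁻ x in Ioi 0, ∫⁻ y in Ioi 0, Ke x * (Fe0 (y - x)) ^ (2:ℝ) := by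
          congr 1
          apply lintegral_lintegral_swap
          apply Measurable.aemeasurable
          exact (hKemeas.comp measurable_snd).mul
            ((hFe0meas.comp (measurable_fst.sub measurable_snd)).pow_const _)
      _ ≤ Ae * ∫⁻ x in Ioi 0, Ke x * Be2 := by
          apply mul_le_mul_right
          apply lintegral_mono
          intro x
          show (∫⁻ y in Ioi 0, Ke x * Fe0 (y - x) ^ (2:ℝ)) ≤ Ke x * Be2
          have hm : Measurable fun y : ℝ => Fe0 (y - x) ^ (2:ℝ) :=
            (hFe0meas.comp (measurable_id.sub measurable_const)).pow_const _
          rw [lintegral_const_mul _ hm]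
          exact mul_le_mul_right (hshift x) _
      _ = Ae ^ (2:ℝ) * Be2 := by
          rw [lintegral_mul_const' _ _ hBe2top, ← hAedef, rp2, sq]
          ring
  -- continuous representative of the convolution
  set φ : ℝ → ℝ := (Ici 0).indicator (fun u => Real.exp (2*u/ρ) * HC u) with hφdef
  have hφint : ∀ a b : ℝ, IntervalIntegrable φ volume a b := by
    intro a b
    rw [intervalIntegrable_iff]
    rw [hφdef]
    apply MeasureTheory.IntegrableOn.indicator _ measurableSet_Ici
    apply Continuous.integrableOn_uIoc
    fun_prop
  set P : ℝ → ℝ := fun y => ∫ t in (0:ℝ)..y, φ t with hPdef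
  have hPcont : Continuous P := intervalIntegral.continuous_primitive hφint 0
  have convEq : ∀ y : ℝ, 0 ≤ y →
      (∫ x in (0:ℝ)..y, (4/ρ * Real.exp (-2*x/ρ)) * H (y-x))
        = (4/ρ) * Real.exp (-2*y/ρ) * P y := by
    intro y hy
    have h1 : (∫ x in (0:ℝ)..y, (4/ρ * Real.exp (-2*x/ρ)) * H (y-x))
        = ∫ u in (0:ℝ)..y, (4/ρ * Real.exp (-2*(y-u)/ρ)) * H u := by
      have h2 := intervalIntegral.integral_comp_sub_left (a := 0) (b := y)
        (fun u => (4/ρ * Real.exp (-2*(y-u)/ρ)) * H u) y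
      simp only [sub_sub_cancel, sub_zero, sub_self] at h2
      exact h2
    rw [h1]
    have h3 : ∀ u ∈ uIcc (0:ℝ) y,
        (4/ρ * Real.exp (-2*(y-u)/ρ)) * H u
          = ((4/ρ) * Real.exp (-2*y/ρ)) * φ u := by
      intro u hu
      rw [uIcc_of_le hy] at hu
      rw [hφdef]
      rw [indicator_of_mem (mem_Ici.2 hu.1)]
      rw [← Hid u hu.1]
      have : Real.exp (-2*(y-u)/ρ) = Real.exp (-2*y/ρ) * Real.exp (2*u/ρ) := by
        rw [← Real.exp_add]; congr 1; ring
      rw [this]; ring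
    rw [intervalIntegral.integral_congr h3, intervalIntegral.integral_const_mul, hPdef]
  -- pointwise bound on (0,∞)
  have hS2 : ∀ y : ℝ, 0 < y →
      ENNReal.ofReal (CP y ^ 2 * Real.exp (μ*y)) ≤ (2⁻¹ * Te y + Fe y) ^ (2:ℝ) := by
    intro y hy
    set conv : ℝ := ∫ x in (0:ℝ)..y, (4/ρ * Real.exp (-2*x/ρ)) * H (y-x) with hconvdef
    have e1 : CP y ^ 2 * Real.exp (μ*y) = (|CP y| * Real.exp (μ*y/2)) ^ 2 := by
      rw [mul_pow, sq_abs]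
      congr 1
      rw [sq, ← Real.exp_add]
      congr 1; ring
    rw [e1, ENNReal.ofReal_pow (by positivity), rp2 (2⁻¹ * Te y + Fe y)]
    apply pow_le_pow_left₀ zero_le
    -- main scalar bound
    have htri : |CP y| * Real.exp (μ*y/2)
        ≤ 2⁻¹ * (|conv| * Real.exp (μ*y/2)) + |H y| * Real.exp (μ*y/2) := by
      have hab : |CP y| ≤ 2⁻¹ * |conv| + |H y| := by
        rw [hCP y, ← hconvdef]
        rw [abs_div]
        have h1 : |conv - 2 * H y| ≤ |conv| + 2 * |H y| := by
          calc |conv - 2 * H y| ≤ |conv| + |2 * H y| := abs_sub _ _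
            _ = |conv| + 2 * |H y| := by rw [abs_mul]; norm_num
        have h2 : |(2:ℝ)| = 2 := by norm_num
        rw [h2]
        linarith
      have he := Real.exp_pos (μ*y/2)
      nlinarith [abs_nonneg conv, abs_nonneg (H y), abs_nonneg (CP y)]
    calc ENNReal.ofReal (|CP y| * Real.exp (μ*y/2))
        ≤ ENNReal.ofReal (2⁻¹ * (|conv| * Real.exp (μ*y/2)) + |H y| * Real.exp (μ*y/2)) :=
          ENNReal.ofReal_le_ofReal htri
      _ = 2⁻¹ * ENNReal.ofReal (|conv| * Real.exp (μ*y/2))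
            + ENNReal.ofReal (|H y| * Real.exp (μ*y/2)) := by
          rw [ENNReal.ofReal_add (by positivity) (by positivity),
            ENNReal.ofReal_mul (by norm_num : (0:ℝ) ≤ 2⁻¹)]
          congr 1
          congr 1
          rw [show ((2:ℝ)⁻¹ = (2:ℝ)⁻¹) from rfl]
          rw [ENNReal.ofReal_inv_of_pos (by norm_num : (0:ℝ) < 2)]
          norm_num
      _ ≤ 2⁻¹ * Te y + Fe y := by
          apply add_le_add
          · apply mul_le_mul_right
            -- |conv| e^{μy/2} ≤ Te y
            have hc1 : ENNReal.ofReal |conv|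
                ≤ ∫⁻ x in Ioc 0 y, ‖(4/ρ * Real.exp (-2*x/ρ)) * H (y-x)‖₊ := by
              rw [hconvdef, intervalIntegral.integral_of_le (le_of_lt hy),
                ← Real.enorm_eq_ofReal_abs]
              simpa only [enorm_eq_nnnorm] using enorm_integral_le_lintegral_enorm _
            calc ENNReal.ofReal (|conv| * Real.exp (μ*y/2))
                = ENNReal.ofReal |conv| * ENNReal.ofReal (Real.exp (μ*y/2)) := by
                  rw [ENNReal.ofReal_mul (abs_nonneg _)]
              _ ≤ (∫⁻ x in Ioc 0 y, ‖(4/ρ * Real.exp (-2*x/ρ)) * H (y-x)‖₊)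
                    * ENNReal.ofReal (Real.exp (μ*y/2)) := mul_le_mul_left hc1 _
              _ = ∫⁻ x in Ioc 0 y,
                    (‖(4/ρ * Real.exp (-2*x/ρ)) * H (y-x)‖₊ : ENNReal)
                      * ENNReal.ofReal (Real.exp (μ*y/2)) := by
                  rw [lintegral_mul_const' _ _ ENNReal.ofReal_ne_top]
              _ = ∫⁻ x in Ioo 0 y,
                    (‖(4/ρ * Real.exp (-2*x/ρ)) * H (y-x)‖₊ : ENNReal)
                      * ENNReal.ofReal (Real.exp (μ*y/2)) := by
                  rw [← MeasureTheory.restrict_Ioo_eq_restrict_Ioc]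
              _ = ∫⁻ x in Ioo 0 y, Ke x * Fe0 (y - x) := by
                  apply setLIntegral_congr_fun measurableSet_Ioo
                  intro x hx
                  beta_reduce
                  rw [← enorm_eq_nnnorm, Real.enorm_eq_ofReal_abs, ← ENNReal.ofReal_mul (abs_nonneg _)]
                  rw [hKedef, hFe0pos _ (by linarith [hx.2] : 0 < y - x), hFedef]
                  simp only
                  rw [← ENNReal.ofReal_mul (by positivity)]
                  congr 1
                  rw [abs_mul, abs_of_nonneg (by positivity : (0:ℝ) ≤ 4/ρ * Real.exp (-2*x/ρ))]
                  rw [hFCdef]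
                  simp only
                  rw [← Hid (y - x) (by linarith [hx.2])]
                  have hee : Real.exp (μ*y/2) = Real.exp (μ*x/2) * Real.exp (μ*(y-x)/2) := by
                    rw [← Real.exp_add]; congr 1; ring
                  rw [hee]; ring
              _ ≤ Te y := by
                  rw [hTedef]
                  exact lintegral_mono_set Ioo_subset_Ioi_self
          · -- |H y| e^{μy/2} = Fe y
            rw [hFedef, hFCdef]
            simp only
            rw [← Hid y (le_of_lt hy)]
  -- assemble the lintegral bound
  set I : ENNReal := ∫⁻ y in Ioi 0, ENNReal.ofReal (CP y ^ 2 * Real.exp (μ*y)) with hIdef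
  have step1 : I ≤ ∫⁻ y in Ioi 0, (2⁻¹ * Te y + Fe y) ^ (2:ℝ) := by
    rw [hIdef]
    apply lintegral_mono_ae
    filter_upwards [ae_restrict_mem measurableSet_Ioi] with y hy
    exact hS2 y hy
  have hLp := ENNReal.lintegral_Lp_add_le (μ := volume.restrict (Ioi 0))
    (f := fun y => 2⁻¹ * Te y) (g := Fe)
    ((measurable_const.mul hTemeas).aemeasurable) hFemeas.aemeasurable
    (by norm_num : (1:ℝ) ≤ 2)
  have hfirst : (∫⁻ y in Ioi 0, (2⁻¹ * Te y) ^ (2:ℝ))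
      = (2⁻¹:ENNReal) ^ (2:ℝ) * ∫⁻ y in Ioi 0, Te y ^ (2:ℝ) := by
    rw [← lintegral_const_mul' _ _ (by norm_num : ((2⁻¹:ENNReal) ^ (2:ℝ)) ≠ ⊤)]
    apply lintegral_congr
    intro y
    rw [ENNReal.mul_rpow_of_nonneg _ _ (by norm_num : (0:ℝ) ≤ 2)]
  have h1le : (1:ENNReal) ≤ 2⁻¹ * Ae := by
    have : (2⁻¹:ENNReal) * 2 ≤ 2⁻¹ * Ae := mul_le_mul_right hAe2 _
    rwa [ENNReal.inv_mul_cancel (by norm_num) (by norm_num)] at this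
  have hhalfsum : (2⁻¹:ENNReal) * Ae + 2⁻¹ * Ae = Ae := by
    rw [← add_mul]
    have : (2⁻¹:ENNReal) + 2⁻¹ = 1 := by
      rw [← two_mul, ENNReal.mul_inv_cancel (by norm_num) (by norm_num)]
    rw [this, one_mul]
  have hIhalf : I ^ ((1:ℝ)/2) ≤ Ae * Be2 ^ ((1:ℝ)/2) := by
    calc I ^ ((1:ℝ)/2) ≤ (∫⁻ y in Ioi 0, (2⁻¹ * Te y + Fe y) ^ (2:ℝ)) ^ ((1:ℝ)/2) :=
          ENNReal.rpow_le_rpow step1 (by norm_num)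
      _ ≤ (∫⁻ y in Ioi 0, (2⁻¹ * Te y) ^ (2:ℝ)) ^ ((1:ℝ)/2)
            + (∫⁻ y in Ioi 0, Fe y ^ (2:ℝ)) ^ ((1:ℝ)/2) := hLp
      _ ≤ 2⁻¹ * Ae * Be2 ^ ((1:ℝ)/2) + Be2 ^ ((1:ℝ)/2) := by
          apply add_le_add
          · rw [hfirst]
            calc ((2⁻¹:ENNReal) ^ (2:ℝ) * ∫⁻ y in Ioi 0, Te y ^ (2:ℝ)) ^ ((1:ℝ)/2)
                ≤ ((2⁻¹:ENNReal) ^ (2:ℝ) * (Ae ^ (2:ℝ) * Be2)) ^ ((1:ℝ)/2) := by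
                  apply ENNReal.rpow_le_rpow _ (by norm_num)
                  exact mul_le_mul_right hYoung _
              _ = 2⁻¹ * Ae * Be2 ^ ((1:ℝ)/2) := by
                  rw [← mul_assoc, ← ENNReal.mul_rpow_of_nonneg _ _ (by norm_num : (0:ℝ) ≤ 2)]
                  rw [ENNReal.mul_rpow_of_nonneg _ _ (by norm_num : (0:ℝ) ≤ (1:ℝ)/2)]
                  rw [← ENNReal.rpow_mul]
                  norm_num
          · rw [hBe2def]
      _ = (2⁻¹ * Ae + 1) * Be2 ^ ((1:ℝ)/2) := by rw [add_mul, one_mul]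
      _ ≤ Ae * Be2 ^ ((1:ℝ)/2) := by
          apply mul_le_mul_left
          calc (2⁻¹:ENNReal) * Ae + 1 ≤ 2⁻¹ * Ae + 2⁻¹ * Ae := add_le_add_right h1le _
            _ = Ae := hhalfsum
  have hIbound : I ≤ ENNReal.ofReal (A^2 * B2) := by
    have h1 : I = (I ^ ((1:ℝ)/2)) ^ (2:ℝ) := by
      rw [← ENNReal.rpow_mul]; norm_num
    rw [h1]
    calc (I ^ ((1:ℝ)/2)) ^ (2:ℝ) ≤ (Ae * Be2 ^ ((1:ℝ)/2)) ^ (2:ℝ) :=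
          ENNReal.rpow_le_rpow hIhalf (by norm_num)
      _ = Ae ^ (2:ℝ) * Be2 := by
          rw [ENNReal.mul_rpow_of_nonneg _ _ (by norm_num : (0:ℝ) ≤ 2), ← ENNReal.rpow_mul]
          norm_num
      _ = ENNReal.ofReal (A^2 * B2) := by
          rw [← hAe, ← hBe2, rp2, ← ENNReal.ofReal_pow hA0,
            ← ENNReal.ofReal_mul (by positivity)]
  -- measurability of the integrand
  have hmeasCP : AEStronglyMeasurable (fun y => CP y ^ 2 * Real.exp (μ*y))
      (volume.restrict (Ioi 0)) := by
    have hGcont : Continuous fun y : ℝ =>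
        (((4/ρ) * Real.exp (-2*y/ρ) * P y - 2 * HC y)/2) ^ 2 * Real.exp (μ*y) := by
      fun_prop
    apply hGcont.aestronglyMeasurable.congr
    filter_upwards [ae_restrict_mem measurableSet_Ioi] with y hy
    have h1 : CP y = ((4/ρ) * Real.exp (-2*y/ρ) * P y - 2 * HC y)/2 := by
      rw [hCP y]
      simp only
      rw [convEq y (le_of_lt hy), Hid y (le_of_lt hy)]
    rw [h1]
  have hIeq : (∫ y in Ioi (0:ℝ), CP y ^ 2 * Real.exp (μ*y)) = I.toReal := by
    rw [hIdef]
    exact integral_eq_lintegral_of_nonneg_ae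
      (Filter.Eventually.of_forall fun y => by positivity) hmeasCP
  rw [hIeq]
  have htr : I.toReal ≤ A^2 * B2 := by
    have h2 := ENNReal.toReal_mono ENNReal.ofReal_ne_top hIbound
    rwa [ENNReal.toReal_ofReal (by positivity)] at h2
  calc Real.sqrt I.toReal ≤ Real.sqrt (A^2 * B2) := Real.sqrt_le_sqrt htr
    _ = A * Real.sqrt B2 := by
        rw [Real.sqrt_mul (sq_nonneg A), Real.sqrt_sq hA0]
end

section
/- Let φ₀ : ℝ → ℂ satisfy φ₀(0) = 2, |φ₀(x) − 2| ≤ 2|x| and |(φ₀(x)−2)/x + 2i| ≤ (M₂/2)|x| for some M₂ > 0. Set ε₁ = min{1/4, 1/M₂}. Then for all τ > 1 and μ ∈ ℝ with |μ/τ| ≤ ε₁, writing x = μ/τ, one has |2 + (τ−1)(2 − φ₀(x))| ≥ (1/2)(1 + |μ|). -/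
open Real Set

theorem denominator_lower_bound (φ₀ : ℝ → ℂ) (M₂ : ℝ) (hM₂ : 0 < M₂)
    (h0 : φ₀ 0 = 2)
    (h1 : ∀ x : ℝ, ‖φ₀ x - 2‖ ≤ 2 * |x|)
    (h2 : ∀ x : ℝ, x ≠ 0 → ‖(φ₀ x - 2)/(x:ℂ) + 2*Complex.I‖ ≤ (M₂/2) * |x|)
    (ε₁ : ℝ) (hε₁ : ε₁ = min (1/4) (1/M₂)) :
    ∀ τ : ℝ, 1 < τ → ∀ μ : ℝ, |μ/τ| ≤ ε₁ →
      (1/2) * (1 + |μ|) ≤ ‖(2:ℂ) + ((τ:ℂ) - 1) * (2 - φ₀ (μ/τ))‖ := by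
  intro τ hτ μ hμ
  have hτ0 : (0:ℝ) < τ := lt_trans one_pos hτ
  set x : ℝ := μ / τ with hxdef
  by_cases hx : x = 0
  · have hμ0 : μ = 0 := by
      have := hx
      rw [hxdef, div_eq_zero_iff] at this
      rcases this with h | h
      · exact h
      · exact absurd h (ne_of_gt hτ0)
    rw [hx, h0, hμ0]
    simp
    norm_num
  · have hxC : (x:ℂ) ≠ 0 := Complex.ofReal_ne_zero.mpr hx
    set r : ℂ := (φ₀ x - 2)/(x:ℂ) + 2*Complex.I with hrdef
    have hτμ : (τ:ℂ) * (x:ℂ) = (μ:ℂ) := by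
      have hτC : (τ:ℂ) ≠ 0 := by exact_mod_cast ne_of_gt hτ0
      rw [hxdef]; push_cast; field_simp
    have hphi : φ₀ x - 2 = (x:ℂ) * r - 2*Complex.I*(x:ℂ) := by
      rw [hrdef]; field_simp; ring
    have key : (2:ℂ) + ((τ:ℂ) - 1) * (2 - φ₀ x)
        = ((2:ℂ) + 2*Complex.I*(μ:ℂ)) - (((τ:ℂ)-1)*(x:ℂ)*r + 2*Complex.I*(x:ℂ)) := by
      linear_combination ((1:ℂ) - (τ:ℂ)) * hphi + 2*Complex.I*hτμ
    have tri : ‖(2:ℂ)+2*Complex.I*(μ:ℂ)‖ - ‖((τ:ℂ)-1)*(x:ℂ)*r + 2*Complex.I*(x:ℂ)‖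
        ≤ ‖(2:ℂ) + ((τ:ℂ) - 1) * (2 - φ₀ x)‖ := by
      rw [key]; exact norm_sub_norm_le _ _
    -- bound A : 1 + |μ| ≤ ‖2 + 2Iμ‖
    have hA : 1 + |μ| ≤ ‖(2:ℂ)+2*Complex.I*(μ:ℂ)‖ := by
      have hre : ((2:ℂ)+2*Complex.I*(μ:ℂ)).re = 2 := by simp
      have him : ((2:ℂ)+2*Complex.I*(μ:ℂ)).im = 2*μ := by simp
      have h1' := Complex.abs_re_le_norm ((2:ℂ)+2*Complex.I*(μ:ℂ))
      have h2' := Complex.abs_im_le_norm ((2:ℂ)+2*Complex.I*(μ:ℂ))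
      rw [hre] at h1'
      rw [him, abs_mul] at h2'
      have : ‖(2:ℂ)+2*Complex.I*(μ:ℂ)‖ = ‖(2:ℂ)+2*Complex.I*(μ:ℂ)‖ := rfl
      rw [this]
      have h2abs : |(2:ℝ)| = 2 := by norm_num
      rw [h2abs] at h2'
      have h1abs : |(2:ℝ)| = 2 := by norm_num
      rw [h1abs] at h1'
      linarith
    -- bounds on x
    have hxε : |x| ≤ ε₁ := hμ
    have hx14 : |x| ≤ 1/4 := le_trans hxε (by rw [hε₁]; exact min_le_left _ _)
    have hxM : |x| ≤ 1/M₂ := le_trans hxε (by rw [hε₁]; exact min_le_right _ _)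
    have hrb : ‖r‖ ≤ (M₂/2) * |x| := h2 x hx
    have hMx : (M₂/2) * |x| ≤ 1/2 := by
      have : M₂ * |x| ≤ M₂ * (1/M₂) := by
        exact mul_le_mul_of_nonneg_left hxM (le_of_lt hM₂)
      rw [mul_one_div, div_self (ne_of_gt hM₂)] at this
      linarith
    have habsx : |x| = |μ|/τ := by
      rw [hxdef, abs_div, abs_of_pos hτ0]
    have hτx : (τ-1) * |x| = |μ| - |x| := by
      rw [habsx]; field_simp
    -- bound B
    have hB : ‖((τ:ℂ)-1)*(x:ℂ)*r + 2*Complex.I*(x:ℂ)‖ ≤ |μ|/2 + 3/8 := by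
      have t1 : ‖((τ:ℂ)-1)*(x:ℂ)*r + 2*Complex.I*(x:ℂ)‖
          ≤ ‖((τ:ℂ)-1)*(x:ℂ)*r‖ + ‖2*Complex.I*(x:ℂ)‖ := norm_add_le _ _
      have t2 : ‖((τ:ℂ)-1)*(x:ℂ)*r‖ = (τ-1) * |x| * ‖r‖ := by
        rw [norm_mul, norm_mul]
        have : ((τ:ℂ)-1) = ((τ-1 : ℝ) : ℂ) := by push_cast; ring
        rw [this, Complex.norm_real, Complex.norm_real,
          Real.norm_eq_abs, Real.norm_eq_abs, abs_of_pos (by linarith : (0:ℝ) < τ-1)]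
      have t3 : ‖2*Complex.I*(x:ℂ)‖ = 2*|x| := by
        rw [norm_mul, norm_mul, Complex.norm_I, Complex.norm_real, Real.norm_eq_abs]
        simp
      have t4 : (τ-1) * |x| * ‖r‖ ≤ (τ-1) * |x| * (1/2) := by
        apply mul_le_mul_of_nonneg_left (le_trans hrb hMx)
        have : (0:ℝ) ≤ |x| := abs_nonneg _
        nlinarith
      have hxnn : (0:ℝ) ≤ |x| := abs_nonneg _
      rw [t2, t3] at t1
      calc ‖((τ:ℂ)-1)*(x:ℂ)*r + 2*Complex.I*(x:ℂ)‖
          ≤ (τ-1) * |x| * ‖r‖ + 2*|x| := t1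
        _ ≤ (τ-1) * |x| * (1/2) + 2*|x| := by linarith
        _ = (|μ| - |x|)/2 + 2*|x| := by rw [hτx]; ring
        _ = |μ|/2 + (3/2)*|x| := by ring
        _ ≤ |μ|/2 + 3/8 := by linarith
    linarith
end
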